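/- arXiv:0909.2013 — 6 statements merged into one kernel-verified Lean document; each statement's English description precedes it below -/
import Mathlib

section
/- Let P be a polyhedral cone in a finite-dimensional rational vector space V and let F be a face of P. Let ⟨F⟩ denote the linear span of the differences x − y for x, y ∈ F, and let N_F = { y ∈ V* : ⟨x, y⟩ ≤ ⟨p, y⟩ for all x ∈ F, p ∈ P } be the normal cone of F. Then ⟨F⟩ equals the annihilator N_F^⊥ = { v ∈ V : ⟨v, y⟩ = 0 for all y ∈ N_F }. -/
/-- A polyhedral cone: intersection of finitely many closed half-spaces through the origin. -/
def IsPolyhedralCone {W : Type*} [AddCommGroup W] [Module ℚ W] (P : Set W) : Prop :=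
  ∃ s : Finset (Module.Dual ℚ W), P = {x | ∀ l ∈ s, 0 ≤ l x}

/-- The normal cone of a face `F` of `P`: functionals attaining their minimum over `P` on `F`. -/
def normalCone {W : Type*} [AddCommGroup W] [Module ℚ W] (P F : Set W) :
    Set (Module.Dual ℚ W) :=
  {y | ∀ x ∈ F, ∀ p ∈ P, y x ≤ y p}

/-- A face of a cone `P`: a subset of the form `face_y(P)` for some linear functional `y`. -/
def IsFace {W : Type*} [AddCommGroup W] [Module ℚ W] (P F : Set W) : Prop :=
  ∃ y : Module.Dual ℚ W, F = {x ∈ P | ∀ p ∈ P, y x ≤ y p}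

/-- Algebraic relative interior of a convex set. -/
def relint {W : Type*} [AddCommGroup W] [Module ℚ W] (F : Set W) : Set W :=
  {x ∈ F | ∀ y ∈ F, ∃ ε : ℚ, 0 < ε ∧ x + ε • (x - y) ∈ F}

/-- The linear span `⟨F⟩` of differences of elements of `F`. -/
def spanDiff {W : Type*} [AddCommGroup W] [Module ℚ W] (F : Set W) : Submodule ℚ W :=
  Submodule.span ℚ {v | ∃ x ∈ F, ∃ y ∈ F, v = x - y}

/-- The span of differences of a face equals the annihilator of its normal cone. -/
theorem span_face_eq_normalCone_perp
    (V : Type*) [AddCommGroup V] [Module ℚ V] [FiniteDimensional ℚ V]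
    (P F : Set V) (hP : IsPolyhedralCone P) (hF : IsFace P F) :
    (spanDiff F : Set V) = {v : V | ∀ y ∈ normalCone P F, y v = 0} := by
  classical
  obtain ⟨s, rfl⟩ := hP
  obtain ⟨y₀, rfl⟩ := hF
  set P : Set V := {x | ∀ l ∈ s, 0 ≤ l x} with hPdef
  set F : Set V := {x ∈ P | ∀ p ∈ P, y₀ x ≤ y₀ p} with hFdef
  -- the RHS as a submodule
  have hFP : F ⊆ P := fun x hx => hx.1
  apply Set.Subset.antisymm
  · -- easy direction
    intro v hv
    have : v ∈ Submodule.span ℚ {v | ∃ x ∈ F, ∃ y ∈ F, v = x - y} := hv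
    simp only [Set.mem_setOf_eq]
    intro y hy
    -- the annihilator is a submodule
    have hle : Submodule.span ℚ {v | ∃ x ∈ F, ∃ y' ∈ F, v = x - y'} ≤
        LinearMap.ker y := by
      rw [Submodule.span_le]
      rintro _ ⟨x, hx, x', hx', rfl⟩
      have h1 : y x ≤ y x' := hy x hx x' (hFP hx')
      have h2 : y x' ≤ y x := hy x' hx' x (hFP hx)
      simp only [SetLike.mem_coe, LinearMap.mem_ker, map_sub]
      linarith
    exact hle this
  · intro v hv
    simp only [Set.mem_setOf_eq] at hv
    by_cases hFne : F.Nonempty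
    · obtain ⟨x₀, hx₀⟩ := hFne
      have h0P : (0 : V) ∈ P := by intro l hl; simp
      -- y₀ is nonneg on P and zero on F
      have hy₀x₀ : y₀ x₀ = 0 := by
        have h1 : y₀ x₀ ≤ y₀ 0 := hx₀.2 0 h0P
        have h2x : (2 : ℚ) • x₀ ∈ P := by
          intro l hl
          have := hx₀.1 l hl
          simp only [map_smul, smul_eq_mul]
          linarith
        have h2 : y₀ x₀ ≤ y₀ ((2 : ℚ) • x₀) := hx₀.2 _ h2x
        simp only [map_zero, map_smul, smul_eq_mul] at h1 h2
        linarith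
      have hy₀P : ∀ p ∈ P, 0 ≤ y₀ p := fun p hp => hy₀x₀ ▸ hx₀.2 p hp
      have hy₀F : ∀ x ∈ F, y₀ x = 0 := by
        intro x hx
        have h1 : y₀ x ≤ y₀ x₀ := hx.2 x₀ hx₀.1
        have h2 : 0 ≤ y₀ x := hy₀P x hx.1
        linarith [hy₀x₀]
      have hmemF : ∀ x, x ∈ P → y₀ x = 0 → x ∈ F := by
        intro x hxP hx0
        exact ⟨hxP, fun p hp => by rw [hx0]; exact hy₀P p hp⟩
      -- y₀ ∈ normal cone, so y₀ v = 0
      have hy₀N : y₀ ∈ normalCone P F := fun x hx p hp => hx.2 p hp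
      have hy₀v : y₀ v = 0 := hv y₀ hy₀N
      -- each l ∈ s vanishing on F is in the normal cone
      have hlN : ∀ l ∈ s, (∀ x ∈ F, l x = 0) → l v = 0 := by
        intro l hl h0
        exact hv l (fun x hx p hp => by rw [h0 x hx]; exact hp l hl)
      -- pick a point of F in the relative interior: choice per constraint
      let c : Module.Dual ℚ V → V := fun l =>
        if h : ∃ x ∈ F, 0 < l x then h.choose else x₀
      have hcF : ∀ l, c l ∈ F := by
        intro l
        by_cases h : ∃ x ∈ F, 0 < l x
        · simp only [c, dif_pos h]; exact h.choose_spec.1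
        · simp only [c, dif_neg h]; exact hx₀
      have hcpos : ∀ l : Module.Dual ℚ V, (∃ x ∈ F, 0 < l x) → 0 < l (c l) := by
        intro l h
        simp only [c, dif_pos h]
        exact h.choose_spec.2
      set xh : V := ∑ l ∈ s, c l with hxhdef
      have hxhF : xh ∈ F := by
        refine hmemF _ ?_ ?_
        · intro l hl
          rw [hxhdef, map_sum]
          exact Finset.sum_nonneg fun l' _ => (hcF l').1 l hl
        · rw [hxhdef, map_sum]
          exact Finset.sum_eq_zero fun l' _ => hy₀F _ (hcF l')
      -- every l ∈ s not vanishing on F is positive at xh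
      have hxhpos : ∀ l ∈ s, (∃ x ∈ F, 0 < l x) → 0 < l xh := by
        intro l hl h
        rw [hxhdef, map_sum]
        have := Finset.single_le_sum (f := fun l' => l (c l'))
          (fun l' _ => (hcF l').1 l hl) hl
        have := hcpos l h
        linarith
      -- choose ε
      set t : Finset ℚ := insert 1 ((s.filter (fun l : Module.Dual ℚ V => ∃ x ∈ F, 0 < l x)).image
        fun l => l xh / (|l v| + 1)) with htdef
      have htne : t.Nonempty := ⟨1, by simp [htdef]⟩
      set ε : ℚ := t.min' htne with hεdef
      have hεpos : 0 < ε := by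
        have := t.min'_mem htne
        rw [← hεdef] at this
        rw [htdef] at this
        simp only [Finset.mem_insert, Finset.mem_image, Finset.mem_filter] at this
        rcases this with h1 | ⟨l, ⟨hl, hex⟩, heq⟩
        · rw [h1]; norm_num
        · rw [← heq]
          apply div_pos (hxhpos l hl hex)
          positivity
      have hεle : ∀ l ∈ s, (∃ x ∈ F, 0 < l x) → ε * |l v| ≤ l xh := by
        intro l hl hex
        have h1 : ε ≤ l xh / (|l v| + 1) := by
          apply Finset.min'_le
          rw [htdef]
          simp only [Finset.mem_insert, Finset.mem_image, Finset.mem_filter]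
          exact Or.inr ⟨l, ⟨hl, hex⟩, rfl⟩
        have h2 : 0 < |l v| + 1 := by positivity
        have h3 : ε * |l v| ≤ (l xh / (|l v| + 1)) * |l v| :=
          mul_le_mul_of_nonneg_right h1 (abs_nonneg _)
        have h4 : (l xh / (|l v| + 1)) * |l v| ≤ l xh := by
          rw [div_mul_eq_mul_div, div_le_iff₀ h2]
          have := le_of_lt (hxhpos l hl hex)
          nlinarith [abs_nonneg (l v)]
        linarith
      -- l on F: either zero on F or handled above
      have key : ∀ (σ : ℚ), |σ| = 1 → xh + (σ * ε) • v ∈ F := by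
        intro σ hσ
        refine hmemF _ ?_ ?_
        · intro l hl
          by_cases hex : ∃ x ∈ F, 0 < l x
          · have h1 := hεle l hl hex
            have h2 : |l ((σ * ε) • v)| ≤ ε * |l v| := by
              rw [map_smul, smul_eq_mul, abs_mul, abs_mul, hσ, one_mul,
                abs_of_pos hεpos]
            have h3 := abs_le.mp (le_trans h2 h1)
            rw [map_add]
            linarith [h3.1]
          · push_neg at hex
            have hl0 : ∀ x ∈ F, l x = 0 := by
              intro x hx
              have := hex x hx
              have := hx.1 l hl
              linarith
            have hlv : l v = 0 := hlN l hl hl0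
            rw [map_add, map_smul, smul_eq_mul, hlv, mul_zero,
              hl0 xh hxhF]
            norm_num
        · rw [map_add, map_smul, smul_eq_mul, hy₀v, mul_zero,
            hy₀F xh hxhF, add_zero]
      have ha : xh + ε • v ∈ F := by
        have := key 1 (by norm_num)
        simpa using this
      have hb : xh + (-ε) • v ∈ F := by
        have := key (-1) (by norm_num)
        simpa using this
      -- conclude
      have hdiff : (xh + ε • v) - (xh + (-ε) • v) ∈
          {w : V | ∃ x ∈ F, ∃ y ∈ F, w = x - y} := ⟨_, ha, _, hb, rfl⟩
      have hspan := Submodule.subset_span (R := ℚ) hdiff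
      have heq : (xh + ε • v) - (xh + (-ε) • v) = (2 * ε) • v := by
        module
      rw [heq] at hspan
      have : v = (2 * ε)⁻¹ • ((2 * ε) • v) := by
        rw [smul_smul, inv_mul_cancel₀ (by positivity), one_smul]
      rw [spanDiff]
      show v ∈ Submodule.span ℚ _
      rw [this]
      exact Submodule.smul_mem _ _ hspan
    · -- F empty: v killed by all functionals
      have hN : ∀ y : Module.Dual ℚ V, y ∈ normalCone P F := by
        intro y x hx
        exact absurd ⟨x, hx⟩ hFne
      have hv0 : v = 0 := by
        have : ∀ y : Module.Dual ℚ V, y v = 0 := fun y => hv y (hN y)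
        exact (Module.forall_dual_apply_eq_zero_iff ℚ v).mp this
      rw [hv0]
      exact Submodule.zero_mem _
end

section
/- Let V be a finite-dimensional rational vector space, M ⊆ V a linear subspace, P ⊆ V a polyhedral cone, and F a face of P that is M-stable, meaning the relative interior of F meets M and ⟨F⟩ + M = V, where ⟨F⟩ is the linear span of differences of elements of F. Then the restriction map i* : V* → M* (dual of the inclusion) restricts to a bijection from the normal cone N_F P onto the normal cone N_{F∩M}(P∩M). -/
lemma exists_pos_forall {ι : Type*} (s : Finset ι) (f g : ι → ℚ)
    (h0 : ∀ a ∈ s, 0 ≤ f a) (h : ∀ a ∈ s, 0 < f a ∨ 0 ≤ g a) :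
    ∃ ε : ℚ, 0 < ε ∧ ∀ a ∈ s, 0 ≤ f a + ε * g a := by
  classical
  induction s using Finset.induction_on with
  | empty => exact ⟨1, one_pos, fun a ha => absurd ha (Finset.notMem_empty a)⟩
  | @insert a t hat ih =>
      obtain ⟨ε₀, hε₀, hih⟩ := ih (fun b hb => h0 b (Finset.mem_insert_of_mem hb))
        (fun b hb => h b (Finset.mem_insert_of_mem hb))
      rcases le_or_gt 0 (g a) with hga | hga
      · refine ⟨ε₀, hε₀, fun b hb => ?_⟩
        rcases Finset.mem_insert.mp hb with rfl | hb
        · have h1 := h0 b (Finset.mem_insert_self b t)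
          nlinarith
        · exact hih b hb
      · have hfa : 0 < f a := by
          rcases h a (Finset.mem_insert_self a t) with h' | h'
          · exact h'
          · linarith
        have hmg : (0:ℚ) < -g a := by linarith
        refine ⟨min ε₀ (f a / (-g a)), lt_min hε₀ (by positivity), fun b hb => ?_⟩
        have hεpos : (0:ℚ) < min ε₀ (f a / (-g a)) := lt_min hε₀ (by positivity)
        rcases Finset.mem_insert.mp hb with rfl | hb
        · have h1 : min ε₀ (f b / (-g b)) ≤ f b / (-g b) := min_le_right _ _
          have h2 : min ε₀ (f b / (-g b)) * (-g b) ≤ f b := by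
            rw [← le_div_iff₀ hmg]
            exact h1
          linarith
        · have h3 := hih b hb
          rcases le_or_gt 0 (g b) with hgb | hgb
          · have h4 := h0 b (Finset.mem_insert_of_mem hb)
            nlinarith
          · have h5 : min ε₀ (f a / (-g a)) ≤ ε₀ := min_le_left _ _
            nlinarith

/-- For an `M`-stable face `F` of `P`, restriction of functionals gives a bijection
from the normal cone of `F` in `P` onto the normal cone of `F ∩ M` in `P ∩ M`. -/
theorem normalCone_bijOn_restriction
    (V : Type*) [AddCommGroup V] [Module ℚ V] [FiniteDimensional ℚ V]
    (M : Submodule ℚ V) (P F : Set V)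
    (hP : IsPolyhedralCone P) (hF : IsFace P F)
    (hrel : (relint F ∩ (M : Set V)).Nonempty)
    (hspan : spanDiff F ⊔ M = ⊤) :
    Set.BijOn (fun y : Module.Dual ℚ V => y.comp M.subtype)
      (normalCone P F)
      (normalCone {x : M | (x : V) ∈ P} {x : M | (x : V) ∈ F}) := by
  classical
  obtain ⟨s, hPs⟩ := hP
  obtain ⟨y, hFy⟩ := hF
  obtain ⟨x₀, hx₀rel, hx₀M⟩ := hrel
  obtain ⟨hx₀F, hx₀mov⟩ := hx₀rel
  have hPmem : ∀ v : V, v ∈ P ↔ ∀ l ∈ s, 0 ≤ l v := fun v => by rw [hPs]; exact Iff.rfl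
  have hFmem : ∀ v : V, v ∈ F ↔ v ∈ P ∧ ∀ p ∈ P, y v ≤ y p := fun v => by
    rw [hFy]; exact Iff.rfl
  have h0P : (0 : V) ∈ P := (hPmem 0).mpr (by intro l hl; simp)
  have hFP : F ⊆ P := fun x hx => ((hFmem x).mp hx).1
  have hx₀P : x₀ ∈ P := hFP hx₀F
  have hyx₀ : y x₀ = 0 := by
    have h2 : (2 : ℚ) • x₀ ∈ P := (hPmem _).mpr (fun l hl => by
      rw [map_smul, smul_eq_mul]
      have := (hPmem x₀).mp hx₀P l hl
      linarith)
    have hmin := ((hFmem x₀).mp hx₀F).2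
    have ha := hmin _ h2
    have hb := hmin 0 h0P
    rw [map_smul, smul_eq_mul] at ha
    rw [map_zero] at hb
    linarith
  have hyF0 : ∀ x ∈ F, y x = 0 := fun x hx => by
    have h1 := ((hFmem x).mp hx).2 x₀ hx₀P
    have h2 := ((hFmem x₀).mp hx₀F).2 x (hFP hx)
    linarith [hyx₀]
  have hyP : ∀ p ∈ P, 0 ≤ y p := fun p hp => hyx₀ ▸ ((hFmem x₀).mp hx₀F).2 p hp
  have h0F : (0 : V) ∈ F := (hFmem 0).mpr ⟨h0P, fun p hp => by
    rw [map_zero]; exact hyP p hp⟩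
  have hlF : ∀ x ∈ F, ∀ l ∈ s, l x₀ = 0 → l x = 0 := by
    intro x hx l hl hl0
    obtain ⟨ε, hε, hmem⟩ := hx₀mov x hx
    have h1 := (hPmem _).mp (hFP hmem) l hl
    rw [map_add, map_smul, map_sub, smul_eq_mul] at h1
    have h2 := (hPmem x).mp (hFP hx) l hl
    nlinarith
  have hNker : ∀ l ∈ s, l x₀ = 0 → ∀ w ∈ spanDiff F, l w = 0 := by
    intro l hl hl0 w hw
    have hle : spanDiff F ≤ LinearMap.ker l := by
      rw [spanDiff, Submodule.span_le]
      rintro v ⟨a, ha, b, hb, rfl⟩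
      simp [LinearMap.mem_ker, map_sub, hlF a ha l hl hl0, hlF b hb l hl hl0]
    exact LinearMap.mem_ker.mp (hle hw)
  have hyN : ∀ w ∈ spanDiff F, y w = 0 := by
    intro w hw
    have hle : spanDiff F ≤ LinearMap.ker y := by
      rw [spanDiff, Submodule.span_le]
      rintro v ⟨a, ha, b, hb, rfl⟩
      simp [LinearMap.mem_ker, map_sub, hyF0 a ha, hyF0 b hb]
    exact LinearMap.mem_ker.mp (hle hw)
  have hFN : ∀ x ∈ F, x ∈ spanDiff F := fun x hx =>
    Submodule.subset_span ⟨x, hx, 0, h0F, by rw [sub_zero]⟩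
  refine ⟨fun u hu => ?_, fun u₁ h₁ u₂ h₂ heq => ?_, fun z hz => ?_⟩
  · exact fun x hx p hp => hu x hx p hp
  · -- injectivity
    have heq' : u₁.comp M.subtype = u₂.comp M.subtype := heq
    have hker : (⊤ : Submodule ℚ V) ≤ LinearMap.ker (u₁ - u₂) := by
      rw [← hspan]
      refine sup_le ?_ ?_
      · rw [spanDiff, Submodule.span_le]
        rintro v ⟨a, ha, b, hb, rfl⟩
        have e1 : u₁ a = u₁ b := le_antisymm (h₁ a ha b (hFP hb)) (h₁ b hb a (hFP ha))
        have e2 : u₂ a = u₂ b := le_antisymm (h₂ a ha b (hFP hb)) (h₂ b hb a (hFP ha))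
        simp [LinearMap.mem_ker, map_sub, LinearMap.sub_apply, e1, e2]
      · intro m hm
        have hm' := LinearMap.congr_fun heq' ⟨m, hm⟩
        simp only [LinearMap.comp_apply, Submodule.subtype_apply] at hm'
        simp [LinearMap.mem_ker, LinearMap.sub_apply, hm']
    have hzero : u₁ - u₂ = 0 := LinearMap.ker_eq_top.mp (top_le_iff.mp hker)
    exact sub_eq_zero.mp hzero
  · -- surjectivity
    set N := spanDiff F with hNdef
    have h0FM : ((0 : M) : V) ∈ F := by simpa using h0F
    have h0PM : ((0 : M) : V) ∈ P := by simpa using h0P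
    have hzF : ∀ m : M, (m : V) ∈ F → z m = 0 := by
      intro m hm
      have h1 := hz m hm 0 h0PM
      have h2 := hz 0 h0FM m (hFP hm)
      rw [map_zero] at h1 h2
      linarith
    have hzP : ∀ m : M, (m : V) ∈ P → 0 ≤ z m := by
      intro m hm
      have h2 := hz 0 h0FM m hm
      rwa [map_zero] at h2
    have hx₀FM : ((⟨x₀, hx₀M⟩ : M) : V) ∈ F := by simpa using hx₀F
    -- well-definedness: z kills M ∩ N
    have hW : ∀ w : M, (w : V) ∈ N → z w = 0 := by
      intro w hw
      obtain ⟨ε, hε, hεall⟩ := exists_pos_forall s (fun l => l x₀) (fun l => l (w : V))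
        (fun l hl => (hPmem x₀).mp hx₀P l hl)
        (fun l hl => by
          rcases eq_or_lt_of_le ((hPmem x₀).mp hx₀P l hl) with h' | h'
          · exact Or.inr (le_of_eq (hNker l hl h'.symm _ hw).symm)
          · exact Or.inl h')
      have hPm : x₀ + ε • (w : V) ∈ P := (hPmem _).mpr (fun l hl => by
        rw [map_add, map_smul, smul_eq_mul]; exact hεall l hl)
      have hFm : x₀ + ε • (w : V) ∈ F := (hFmem _).mpr ⟨hPm, fun p hp => by
        rw [map_add, map_smul, smul_eq_mul, hyx₀, hyN _ hw]
        simpa using hyP p hp⟩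
      have hmF : (((⟨x₀, hx₀M⟩ : M) + ε • w : M) : V) ∈ F := by
        simpa using hFm
      have hzv := hzF _ hmF
      rw [map_add, map_smul, smul_eq_mul, hzF _ hx₀FM] at hzv
      have hmul : ε * z w = 0 := by linarith
      exact (mul_eq_zero.mp hmul).resolve_left (ne_of_gt hε)
    -- positivity
    have hPos : ∀ (m : M) (p : V), p ∈ P → ((m : V) - p) ∈ N → 0 ≤ z m := by
      intro m p hp hmp
      obtain ⟨ε, hε, hεall⟩ := exists_pos_forall s (fun l => l x₀) (fun l => l (m : V))
        (fun l hl => (hPmem x₀).mp hx₀P l hl)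
        (fun l hl => by
          rcases eq_or_lt_of_le ((hPmem x₀).mp hx₀P l hl) with h' | h'
          · refine Or.inr ?_
            have h1 := hNker l hl h'.symm _ hmp
            rw [map_sub] at h1
            have h2 := (hPmem p).mp hp l hl
            linarith
          · exact Or.inl h')
      have hPm : (((⟨x₀, hx₀M⟩ : M) + ε • m : M) : V) ∈ P := by
        have hPm' : x₀ + ε • (m : V) ∈ P := (hPmem _).mpr (fun l hl => by
          rw [map_add, map_smul, smul_eq_mul]; exact hεall l hl)
        simpa using hPm'
      have h1 := hzP _ hPm
      rw [map_add, map_smul, smul_eq_mul, hzF _ hx₀FM] at h1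
      nlinarith
    -- construct the extension
    have hesurj : LinearMap.range (N.mkQ.comp M.subtype) = ⊤ := by
      rw [LinearMap.range_eq_top]
      intro q
      obtain ⟨v, rfl⟩ := N.mkQ_surjective q
      have hv : v ∈ N ⊔ M := hspan ▸ Submodule.mem_top
      obtain ⟨n, hn, m, hm, rfl⟩ := Submodule.mem_sup.mp hv
      refine ⟨⟨m, hm⟩, ?_⟩
      simp only [LinearMap.comp_apply, Submodule.subtype_apply]
      rw [Submodule.mkQ_apply, Submodule.mkQ_apply, Submodule.Quotient.eq]
      simpa using N.neg_mem hn
    obtain ⟨g, hg⟩ := LinearMap.exists_rightInverse_of_surjective _ hesurj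
    set u : Module.Dual ℚ V := (z.comp g).comp N.mkQ with hu
    have huM : ∀ m : M, u (m : V) = z m := by
      intro m
      have h1 := LinearMap.congr_fun hg (N.mkQ (m : V))
      simp only [LinearMap.comp_apply, LinearMap.id_apply, Submodule.subtype_apply] at h1
      have h2 : ((g (N.mkQ (m : V)) - m : M) : V) ∈ N := by
        have := (Submodule.Quotient.eq N).mp h1
        simpa using this
      have h3 := hW _ h2
      rw [map_sub] at h3
      simp only [hu, LinearMap.comp_apply]
      linarith
    have huF : ∀ x ∈ F, u x = 0 := by
      intro x hx
      have hx0 : N.mkQ x = 0 := (Submodule.Quotient.mk_eq_zero N).mpr (hFN x hx)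
      simp [hu, hx0]
    have huP : ∀ p ∈ P, 0 ≤ u p := by
      intro p hp
      have h1 := LinearMap.congr_fun hg (N.mkQ p)
      simp only [LinearMap.comp_apply, LinearMap.id_apply, Submodule.subtype_apply] at h1
      have h2 : ((g (N.mkQ p) : M) : V) - p ∈ N := (Submodule.Quotient.eq N).mp h1
      have h3 := hPos _ p hp h2
      simpa [hu] using h3
    refine ⟨u, fun x hx p hp => ?_, ?_⟩
    · rw [huF x hx]; exact huP p hp
    · exact LinearMap.ext fun m => huM m
end

section
/- Let V be a finite-dimensional rational vector space, M ⊆ V a subspace, P ⊆ V a polyhedral cone, and F an M-stable face of P (i.e., relint(F) ∩ M ≠ ∅ and ⟨F⟩ + M = V). Then the dual cone of the normal cone of F_M = F ∩ M in P_M = P ∩ M, taken inside M, equals the intersection of the dual cone of N_F P with M: N_{F_M}^∨ = N_F^∨ ∩ M. -/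
section helpers
variable {V : Type*} [AddCommGroup V] [Module ℚ V]

lemma shrink_aux {F : Set V}
    (hFadd : ∀ a ∈ F, ∀ b ∈ F, a + b ∈ F)
    (hFsmul : ∀ c : ℚ, 0 ≤ c → ∀ a ∈ F, c • a ∈ F)
    {x0 u : V} (hx0 : x0 ∈ F) {a b : ℚ} (ha : x0 + a • u ∈ F)
    (hb : 0 < b) (hba : b ≤ a) : x0 + b • u ∈ F := by
  have ha0 : 0 < a := lt_of_lt_of_le hb hba
  have h1 : (b / a) • (x0 + a • u) ∈ F := hFsmul _ (by positivity) _ ha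
  have h2 : (1 - b / a) • x0 ∈ F :=
    hFsmul _ (by rw [sub_nonneg]; exact div_le_one_of_le₀ hba ha0.le) _ hx0
  have h3 := hFadd _ h1 _ h2
  have heq : (b / a) • (x0 + a • u) + (1 - b / a) • x0 = x0 + b • u := by
    match_scalars <;> field_simp <;> ring
  rwa [heq] at h3

lemma mem_spanDiff_dir {F : Set V}
    (hFadd : ∀ a ∈ F, ∀ b ∈ F, a + b ∈ F)
    (hFsmul : ∀ c : ℚ, 0 ≤ c → ∀ a ∈ F, c • a ∈ F)
    {x0 : V} (hx0rel : x0 ∈ relint F) :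
    ∀ v ∈ spanDiff F, ∃ δ : ℚ, 0 < δ ∧ x0 + δ • v ∈ F := by
  have hx0 : x0 ∈ F := hx0rel.1
  have base : ∀ f1 ∈ F, ∀ f2 ∈ F, ∃ δ : ℚ, 0 < δ ∧ x0 + δ • (f1 - f2) ∈ F := by
    intro f1 h1 f2 h2
    obtain ⟨ε, hε, hεF⟩ := hx0rel.2 f2 h2
    have h3 : (x0 + ε • (x0 - f2)) + ε • f1 ∈ F :=
      hFadd _ hεF _ (hFsmul _ hε.le _ h1)
    have h4 : (1 + ε)⁻¹ • ((x0 + ε • (x0 - f2)) + ε • f1) ∈ F :=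
      hFsmul _ (by positivity) _ h3
    refine ⟨(1 + ε)⁻¹ * ε, by positivity, ?_⟩
    have hne : (1 : ℚ) + ε ≠ 0 := by positivity
    have heq : (1 + ε)⁻¹ • ((x0 + ε • (x0 - f2)) + ε • f1)
        = x0 + ((1 + ε)⁻¹ * ε) • (f1 - f2) := by
      match_scalars <;> field_simp
    rwa [heq] at h4
  have key : ∀ v ∈ spanDiff F, ∀ c : ℚ, ∃ δ : ℚ, 0 < δ ∧ x0 + δ • (c • v) ∈ F := by
    intro v hv
    induction hv using Submodule.span_induction with
    | mem w hw =>
      obtain ⟨f1, h1, f2, h2, rfl⟩ := hw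
      intro c
      rcases lt_trichotomy c 0 with hc | rfl | hc
      · obtain ⟨δ, hδ, hmem⟩ :=
          base _ (hFsmul (-c) (by linarith) _ h2) _ (hFsmul (-c) (by linarith) _ h1)
        refine ⟨δ, hδ, ?_⟩
        have : ((-c) • f2 - (-c) • f1) = c • (f1 - f2) := by module
        rwa [this] at hmem
      · exact ⟨1, one_pos, by simpa using hx0⟩
      · obtain ⟨δ, hδ, hmem⟩ :=
          base _ (hFsmul c hc.le _ h1) _ (hFsmul c hc.le _ h2)
        refine ⟨δ, hδ, ?_⟩
        have : (c • f1 - c • f2) = c • (f1 - f2) := by module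
        rwa [this] at hmem
    | zero => exact fun c => ⟨1, one_pos, by simpa using hx0⟩
    | add v w hv hw ihv ihw =>
      intro c
      obtain ⟨δ1, hδ1, hm1⟩ := ihv c
      obtain ⟨δ2, hδ2, hm2⟩ := ihw c
      have hd : 0 < min δ1 δ2 := lt_min hδ1 hδ2
      have h1' := shrink_aux hFadd hFsmul hx0 hm1 hd (min_le_left _ _)
      have h2' := shrink_aux hFadd hFsmul hx0 hm2 hd (min_le_right _ _)
      refine ⟨min δ1 δ2 / 2, by positivity, ?_⟩
      have h3 := hFsmul (1/2 : ℚ) (by norm_num) _ (hFadd _ h1' _ h2')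
      have heq : (1/2 : ℚ) • ((x0 + min δ1 δ2 • c • v) + (x0 + min δ1 δ2 • c • w))
          = x0 + (min δ1 δ2 / 2) • (c • (v + w)) := by
        match_scalars <;> ring
      rwa [heq] at h3
    | smul a v hv ih =>
      intro c
      obtain ⟨δ, hδ, hmem⟩ := ih (c * a)
      refine ⟨δ, hδ, ?_⟩
      have : ((c * a) • v) = c • a • v := by module
      rwa [this] at hmem
  exact fun v hv => by simpa using key v hv 1

end helpers

/-- For an `M`-stable face `F` of `P`, the dual cone of the normal cone of `F ∩ M` in
`P ∩ M`, taken inside `M`, equals the intersection of the dual cone of `N_F P` with `M`. -/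
theorem dual_normalCone_inter
    (V : Type*) [AddCommGroup V] [Module ℚ V] [FiniteDimensional ℚ V]
    (M : Submodule ℚ V) (P F : Set V)
    (hP : IsPolyhedralCone P) (hF : IsFace P F)
    (hrel : (relint F ∩ (M : Set V)).Nonempty)
    (hspan : spanDiff F ⊔ M = ⊤) :
    {x : M | ∀ y ∈ normalCone {x : M | (x : V) ∈ P} {x : M | (x : V) ∈ F}, 0 ≤ y x}
      = {x : M | ∀ y ∈ normalCone P F, 0 ≤ y (x : V)} := by
  -- basic cone facts about P
  obtain ⟨s, hPs⟩ := hP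
  have hP0 : (0 : V) ∈ P := by rw [hPs]; intro l hl; simp
  have hPadd : ∀ a ∈ P, ∀ b ∈ P, a + b ∈ P := by
    rw [hPs]; intro a ha b hb l hl
    have h1 := ha l hl; have h2 := hb l hl
    simp only [Set.mem_setOf_eq, map_add]; linarith
  have hPsmul : ∀ c : ℚ, 0 ≤ c → ∀ a ∈ P, c • a ∈ P := by
    rw [hPs]; intro c hc a ha l hl
    have h1 := ha l hl
    simp only [Set.mem_setOf_eq, map_smul, smul_eq_mul]
    positivity
  obtain ⟨y0, hFy0⟩ := hF
  have hFP : F ⊆ P := by rw [hFy0]; exact fun z hz => hz.1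
  obtain ⟨x0, hx0rel, hx0M⟩ := hrel
  have hx0F : x0 ∈ F := hx0rel.1
  have hy0F : ∀ f ∈ F, y0 f = 0 := by
    intro f hf
    rw [hFy0] at hf
    obtain ⟨hfP, hmin⟩ := hf
    have h1 := hmin 0 hP0
    have h2 := hmin _ (hPadd _ hfP _ hfP)
    simp only [map_zero, map_add] at h1 h2
    linarith
  have hy0P : ∀ p ∈ P, 0 ≤ y0 p := by
    intro p hp
    have := (hFy0 ▸ hx0F).2 p hp
    rwa [hy0F x0 hx0F] at this
  have hFadd : ∀ a ∈ F, ∀ b ∈ F, a + b ∈ F := by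
    intro a ha b hb
    rw [hFy0]
    refine ⟨hPadd _ (hFP ha) _ (hFP hb), fun p hp => ?_⟩
    rw [map_add, hy0F a ha, hy0F b hb]
    simpa using hy0P p hp
  have hFsmul : ∀ c : ℚ, 0 ≤ c → ∀ a ∈ F, c • a ∈ F := by
    intro c hc a ha
    rw [hFy0]
    refine ⟨hPsmul _ hc _ (hFP ha), fun p hp => ?_⟩
    rw [map_smul, hy0F a ha, smul_zero]
    exact hy0P p hp
  have hdir := mem_spanDiff_dir hFadd hFsmul hx0rel
  ext x
  simp only [Set.mem_setOf_eq]
  constructor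
  · -- easy direction: restrict a normal functional to M
    intro hx y hy
    exact hx (y.comp M.subtype) (fun f hf p hp => hy _ hf _ hp)
  · -- hard direction: extend yt : M* to V*
    intro hx yt hyt
    set x0M : M := ⟨x0, hx0M⟩ with hx0Mdef
    have hx0MF : ((x0M : V) ∈ F) := hx0F
    have hytF : ∀ f : M, (f : V) ∈ F → yt f = 0 := by
      intro f hf
      have h1 := hyt f hf 0 (by simp [hP0])
      have h2 := hyt f hf (f + f) (by simpa using hPadd _ (hFP hf) _ (hFP hf))
      simp only [map_zero, map_add] at h1 h2
      linarith
    have hytP : ∀ p : M, (p : V) ∈ P → 0 ≤ yt p := by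
      intro p hp
      have := hyt x0M hx0MF p hp
      rwa [hytF x0M hx0MF] at this
    have hytK : ∀ m : M, (m : V) ∈ spanDiff F → yt m = 0 := by
      intro m hm
      obtain ⟨δ, hδ, hmem⟩ := hdir _ hm
      have hFm : ((x0M + δ • m : M) : V) ∈ F := by
        push_cast
        exact hmem
      have h0 := hytF _ hFm
      rw [map_add, map_smul, hytF x0M hx0MF, zero_add, smul_eq_mul] at h0
      exact (mul_eq_zero.mp h0).resolve_left hδ.ne'
    -- complement inside M
    obtain ⟨M1, hM1⟩ := Submodule.exists_isCompl ((spanDiff F).comap M.subtype)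
    set M1' : Submodule ℚ V := M1.map M.subtype with hM1'def
    have hM1M : M1' ≤ M := by
      rintro v ⟨m, hm, rfl⟩; exact m.2
    have hcompl : IsCompl (spanDiff F) M1' := by
      constructor
      · rw [disjoint_iff_inf_le]
        rintro v ⟨hvK, hvM1⟩
        obtain ⟨m, hm, rfl⟩ := hvM1
        have hm0 : m ∈ (spanDiff F).comap M.subtype := hvK
        have : m ∈ ((spanDiff F).comap M.subtype) ⊓ M1 := ⟨hm0, hm⟩
        rw [hM1.inf_eq_bot] at this
        simp only [Submodule.mem_bot] at this
        simp [this]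
      · rw [codisjoint_iff]
        apply le_antisymm le_top
        rw [← hspan]
        apply sup_le le_sup_left
        intro v hv
        have : (⟨v, hv⟩ : M) ∈ ((spanDiff F).comap M.subtype) ⊔ M1 := by
          rw [hM1.sup_eq_top]; trivial
        obtain ⟨a, ha, b, hb, hab⟩ := Submodule.mem_sup.mp this
        have : v = (a : V) + (b : V) := by
          rw [← Submodule.coe_add, hab]
        rw [this]
        exact Submodule.add_mem_sup ha ⟨b, hb, rfl⟩
    set π := M1'.linearProjOfIsCompl (spanDiff F) hcompl.symm with hπdef
    set y : Module.Dual ℚ V := yt.comp ((Submodule.inclusion hM1M).comp π) with hydef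
    have hyK : ∀ k ∈ spanDiff F, y k = 0 := by
      intro k hk
      have : π k = 0 := Submodule.projectionOnto_apply_of_mem_right hcompl.symm hk
      simp [hydef, this]
    have hyM1 : ∀ v (hv : v ∈ M1'), y v = yt ⟨v, hM1M hv⟩ := by
      intro v hv
      have : π v = ⟨v, hv⟩ := Submodule.linearProjOfIsCompl_apply_left hcompl.symm ⟨v, hv⟩
      simp only [hydef, LinearMap.comp_apply, this]
      rfl
    have hyM : ∀ m : M, y (m : V) = yt m := by
      intro m
      have hm : m ∈ ((spanDiff F).comap M.subtype) ⊔ M1 := by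
        rw [hM1.sup_eq_top]; trivial
      obtain ⟨a, ha, b, hb, hab⟩ := Submodule.mem_sup.mp hm
      have hbM1' : ((b : V) ∈ M1') := ⟨b, hb, rfl⟩
      have hcoe : (m : V) = (a : V) + (b : V) := by rw [← Submodule.coe_add, hab]
      have h1 : y (m : V) = y (a : V) + y (b : V) := by rw [hcoe, map_add]
      have h2 : yt m = yt a + yt b := by rw [← hab, map_add]
      have h3 : y (a : V) = 0 := hyK _ ha
      have h4 : yt a = 0 := hytK a ha
      have h5 : y (b : V) = yt ⟨(b : V), hM1M hbM1'⟩ := hyM1 _ hbM1'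
      have h6 : (⟨(b : V), hM1M hbM1'⟩ : M) = b := rfl
      rw [h1, h2, h3, h4, h5, h6]
    have hyF : ∀ f ∈ F, y f = 0 := by
      intro f hf
      have hfk : f - x0 ∈ spanDiff F := Submodule.subset_span ⟨f, hf, x0, hx0F, rfl⟩
      have h1 : y (f - x0) = 0 := hyK _ hfk
      have h2 : y x0 = 0 := by
        have := hyM x0M
        rwa [hytF x0M hx0MF] at this
      rw [map_sub, h2, sub_zero] at h1
      exact h1
    have hyP : ∀ p ∈ P, 0 ≤ y p := by
      intro p hp
      have hpmem : p ∈ spanDiff F ⊔ M1' := by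
        rw [hcompl.sup_eq_top]; trivial
      obtain ⟨k, hk, m1, hm1, rfl⟩ := Submodule.mem_sup.mp hpmem
      obtain ⟨δ, hδ, hmem⟩ := hdir (-k) (neg_mem hk)
      have hq : δ⁻¹ • (x0 + δ • (-k)) ∈ F := hFsmul _ (by positivity) _ hmem
      have hsum : (k + m1) + δ⁻¹ • (x0 + δ • (-k)) ∈ P := hPadd _ hp _ (hFP hq)
      have heq : (k + m1) + δ⁻¹ • (x0 + δ • (-k)) = m1 + δ⁻¹ • x0 := by
        have hδne : δ ≠ 0 := hδ.ne'
        match_scalars <;> field_simp <;> ring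
      rw [heq] at hsum
      have hm1M : m1 ∈ M := hM1M hm1
      have hqM : ((⟨m1, hm1M⟩ + δ⁻¹ • x0M : M) : V) ∈ P := by
        push_cast
        exact hsum
      have h0 := hytP _ hqM
      rw [map_add, map_smul, hytF x0M hx0MF, smul_zero, add_zero] at h0
      have hy1 : y (k + m1) = yt ⟨m1, hm1M⟩ := by
        rw [map_add, hyK k hk, zero_add]
        exact hyM1 _ hm1
      rw [hy1]
      exact h0
    have hmem : y ∈ normalCone P F := by
      intro f hf p hp
      rw [hyF f hf]
      exact hyP p hp
    have := hx y hmem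
    rwa [hyM x] at this
end

section
/- Let V be a finite-dimensional rational vector space, M ⊆ V a subspace, P ⊆ V a polyhedral cone, and F an M-stable face of P, i.e., the relative interior of F meets M and ⟨F⟩ + M = V. Then the restriction map V* → M* induces an isomorphism of vector spaces from F^⊥ = { y ∈ V* : ⟨F, y⟩ = 0 } onto F_M^⊥ = { z ∈ M* : ⟨F ∩ M, z⟩ = 0 }, where we assume 0 ∈ F. -/
/-- For an `M`-stable face `F` of `P` with `0 ∈ F`, restriction of functionals gives an
isomorphism from the annihilator of `F` in the dual of `V` onto the annihilator of
`F ∩ M` in the dual of `M`. -/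
theorem annihilator_bijOn_restriction
    (V : Type*) [AddCommGroup V] [Module ℚ V] [FiniteDimensional ℚ V]
    (M : Submodule ℚ V) (P F : Set V)
    (hP : IsPolyhedralCone P) (hF : IsFace P F) (h0 : (0 : V) ∈ F)
    (hrel : (relint F ∩ (M : Set V)).Nonempty)
    (hspan : spanDiff F ⊔ M = ⊤) :
    Set.BijOn (fun y : Module.Dual ℚ V => y.comp M.subtype)
      {y : Module.Dual ℚ V | ∀ x ∈ F, y x = 0}
      {z : Module.Dual ℚ M | ∀ x : M, (x : V) ∈ F → z x = 0} := by
  classical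
  obtain ⟨s, hPs⟩ := hP
  obtain ⟨y, hFy⟩ := hF
  have hFsubP : F ⊆ P := fun x hx => by rw [hFy] at hx; exact hx.1
  have h0P : (0 : V) ∈ P := hFsubP h0
  have hy0 : ∀ p ∈ P, 0 ≤ y p := by
    intro p hp
    rw [hFy] at h0
    have := h0.2 p hp
    simpa using this
  have hyF : ∀ x ∈ F, y x = 0 := by
    intro x hx
    have hxP := hFsubP hx
    rw [hFy] at hx
    have h1 := hx.2 0 h0P
    simp only [map_zero] at h1
    exact le_antisymm h1 (hy0 x hxP)
  have hPadd : ∀ a ∈ P, ∀ b ∈ P, a + b ∈ P := by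
    intro a ha b hb
    rw [hPs] at ha hb ⊢
    intro l hl
    have := add_nonneg (ha l hl) (hb l hl)
    simpa using this
  have hPsmul : ∀ (c : ℚ), 0 ≤ c → ∀ a ∈ P, c • a ∈ P := by
    intro c hc a ha
    rw [hPs] at ha ⊢
    intro l hl
    have := mul_nonneg hc (ha l hl)
    simpa using this
  have hmemF : ∀ x ∈ P, y x = 0 → x ∈ F := by
    intro x hx hyx
    rw [hFy]
    exact ⟨hx, fun p hp => hyx ▸ hy0 p hp⟩
  have hFadd : ∀ a ∈ F, ∀ b ∈ F, a + b ∈ F := by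
    intro a ha b hb
    refine hmemF _ (hPadd a (hFsubP ha) b (hFsubP hb)) ?_
    simp [hyF a ha, hyF b hb]
  have hFsmul : ∀ (c : ℚ), 0 ≤ c → ∀ a ∈ F, c • a ∈ F := by
    intro c hc a ha
    refine hmemF _ (hPsmul c hc a (hFsubP ha)) ?_
    simp [hyF a ha]
  -- every element of spanDiff F is a difference of two elements of F
  have hdecomp : ∀ v ∈ spanDiff F, ∃ a ∈ F, ∃ b ∈ F, v = a - b := by
    intro v hv
    refine Submodule.span_induction ?_ ?_ ?_ ?_ hv
    · rintro x ⟨a, ha, b, hb, rfl⟩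
      exact ⟨a, ha, b, hb, rfl⟩
    · exact ⟨0, h0, 0, h0, by simp⟩
    · rintro u w - - ⟨a, ha, b, hb, rfl⟩ ⟨a', ha', b', hb', rfl⟩
      exact ⟨a + a', hFadd a ha a' ha', b + b', hFadd b hb b' hb', by abel⟩
    · rintro c u - ⟨a, ha, b, hb, rfl⟩
      rcases le_or_gt 0 c with hc | hc
      · exact ⟨c • a, hFsmul c hc a ha, c • b, hFsmul c hc b hb, by
          rw [smul_sub]⟩
      · refine ⟨(-c) • b, hFsmul (-c) (by linarith) b hb,
          (-c) • a, hFsmul (-c) (by linarith) a ha, ?_⟩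
        rw [smul_sub]
        module
  have hFsubS : F ⊆ (spanDiff F : Set V) := by
    intro x hx
    exact Submodule.subset_span ⟨x, hx, 0, h0, by simp⟩
  obtain ⟨x₀, hx₀rel, hx₀M⟩ := hrel
  have hx₀F : x₀ ∈ F := hx₀rel.1
  constructor
  · -- MapsTo
    intro w hw x hxF
    exact hw x hxF
  constructor
  · -- InjOn
    intro y₁ hy₁ y₂ hy₂ heq
    have hker : spanDiff F ⊔ M ≤ LinearMap.ker (y₁ - y₂) := by
      refine sup_le ?_ ?_
      · rw [spanDiff, Submodule.span_le]
        rintro v ⟨a, ha, b, hb, rfl⟩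
        simp [LinearMap.mem_ker, hy₁ a ha, hy₁ b hb, hy₂ a ha, hy₂ b hb]
      · intro m hm
        have heq' : y₁.comp M.subtype = y₂.comp M.subtype := heq
        have := DFunLike.congr_fun heq' ⟨m, hm⟩
        simpa [LinearMap.mem_ker, sub_eq_zero] using this
    rw [hspan] at hker
    have : y₁ - y₂ = 0 := by
      ext v
      simpa [LinearMap.mem_ker] using hker (Submodule.mem_top : v ∈ ⊤)
    exact sub_eq_zero.mp this
  · -- SurjOn
    intro z hz
    -- z vanishes on M ∩ spanDiff F
    have hzS : ∀ m : M, (m : V) ∈ spanDiff F → z m = 0 := by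
      intro m hm
      obtain ⟨a, ha, b, hb, hab⟩ := hdecomp _ hm
      obtain ⟨ε, hε, hw⟩ := hx₀rel.2 b hb
      have hw2 : x₀ + ε • (x₀ - b) + ε • a ∈ F := hFadd _ hw _ (hFsmul ε hε.le a ha)
      have hweq : x₀ + ε • (x₀ - b) + ε • a = (1 + ε) • x₀ + ε • (m : V) := by
        rw [hab]; module
      set w : M := (1 + ε) • ⟨x₀, hx₀M⟩ + ε • m with hwdef
      have hwV : (w : V) = (1 + ε) • x₀ + ε • (m : V) := by simp [hwdef]
      have hwF : (w : V) ∈ F := by rw [hwV, ← hweq]; exact hw2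
      have hzw : z w = 0 := hz w hwF
      have hzx₀ : z ⟨x₀, hx₀M⟩ = 0 := hz _ hx₀F
      rw [hwdef, map_add, map_smul, map_smul, hzx₀, smul_zero, zero_add,
        smul_eq_mul] at hzw
      rcases mul_eq_zero.mp hzw with h | h
      · exact absurd h (ne_of_gt hε)
      · exact h
    set S := spanDiff F with hS
    set f : M →ₗ[ℚ] V ⧸ S := S.mkQ.comp M.subtype with hf
    have hfsurj : Function.Surjective f := by
      intro q
      obtain ⟨v, rfl⟩ := S.mkQ_surjective q
      have hv : v ∈ S ⊔ M := hspan ▸ Submodule.mem_top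
      obtain ⟨sv, hsv, mv, hmv, rfl⟩ := Submodule.mem_sup.mp hv
      refine ⟨⟨mv, hmv⟩, ?_⟩
      simp only [hf, LinearMap.comp_apply, Submodule.subtype_apply]
      have h0' : S.mkQ sv = 0 := (Submodule.Quotient.mk_eq_zero S).mpr hsv
      rw [map_add, h0', zero_add]
    have hkerf : LinearMap.ker f ≤ LinearMap.ker z := by
      intro m hm
      simp only [hf, LinearMap.mem_ker, LinearMap.comp_apply, Submodule.mkQ_apply,
        Submodule.Quotient.mk_eq_zero] at hm
      exact hzS m hm
    have hrange : LinearMap.range f = ⊤ := LinearMap.range_eq_top.mpr hfsurj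
    let e : (M ⧸ LinearMap.ker f) ≃ₗ[ℚ] (V ⧸ S) := f.quotKerEquivOfSurjective hfsurj
    let zbar : (M ⧸ LinearMap.ker f) →ₗ[ℚ] ℚ := (LinearMap.ker f).liftQ z hkerf
    refine ⟨(zbar.comp (e.symm : (V ⧸ S) →ₗ[ℚ] (M ⧸ LinearMap.ker f))).comp S.mkQ, ?_, ?_⟩
    · intro x hxF
      have : S.mkQ x = 0 := (Submodule.Quotient.mk_eq_zero S).mpr (hFsubS hxF)
      simp [LinearMap.comp_apply, this]
    · ext m
      have he : e ((LinearMap.ker f).mkQ m) = f m := rfl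
      have he' : e.symm (f m) = (LinearMap.ker f).mkQ m := by
        rw [← he, LinearEquiv.symm_apply_apply]
      simp only [LinearMap.comp_apply, Submodule.subtype_apply]
      have : S.mkQ (m : V) = f m := rfl
      rw [this]
      simp only [LinearEquiv.coe_coe]
      rw [he']
      rfl
end

section
/- Let P be a polyhedron in a finite-dimensional rational vector space V (an intersection of finitely many closed affine half-spaces), and for each face F of P let N_F P = { y ∈ V* : y attains its minimum over P on F } be its normal cone. Then the collection { N_F P : F a face of P } is a fan in V*: each N_F P is a polyhedral cone, every face of N_F P is again some N_G P, and the intersection of any two cones in the collection is a common face of both. -/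
/-- A polyhedron: intersection of finitely many closed affine half-spaces. -/
def IsPolyhedron {W : Type*} [AddCommGroup W] [Module ℚ W] (P : Set W) : Prop :=
  ∃ s : Finset (Module.Dual ℚ W × ℚ), P = {x | ∀ p ∈ s, p.2 ≤ p.1 x}

/-- A face of a polyhedron `P`: a set of the form `face_y(P)` with the minimum attained. -/
def IsFaceOf {W : Type*} [AddCommGroup W] [Module ℚ W] (P F : Set W) : Prop :=
  ∃ y : Module.Dual ℚ W,
    (∃ x ∈ P, ∀ p ∈ P, y x ≤ y p) ∧ F = {x ∈ P | ∀ p ∈ P, y x ≤ y p}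

/-- A face of a cone `C`: cut out by a functional nonnegative on `C`. -/
def IsConeFace {W : Type*} [AddCommGroup W] [Module ℚ W] (C F : Set W) : Prop :=
  ∃ y : Module.Dual ℚ W, (∀ x ∈ C, 0 ≤ y x) ∧ F = {x ∈ C | y x = 0}


open Module

section Cone
variable {W : Type*} [AddCommGroup W] [Module ℚ W]

def coneList : List W → Set W
  | [] => {0}
  | v :: L => {x | ∃ c : ℚ, 0 ≤ c ∧ ∃ z ∈ coneList L, x = c • v + z}

lemma zero_mem_coneList (L : List W) : (0:W) ∈ coneList L := by
  induction L with
  | nil => rfl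
  | cons v L ih => exact ⟨0, le_refl _, 0, ih, by simp⟩

def IsCone (S : Set W) : Prop :=
  (0:W) ∈ S ∧ (∀ x ∈ S, ∀ y ∈ S, x + y ∈ S) ∧ (∀ c : ℚ, 0 ≤ c → ∀ x ∈ S, c • x ∈ S)

lemma coneList_subset {S : Set W} (hS : IsCone S) {L : List W} (h : ∀ v ∈ L, v ∈ S) :
    coneList L ⊆ S := by
  induction L with
  | nil => intro x hx; simp only [coneList, Set.mem_singleton_iff] at hx; subst hx; exact hS.1
  | cons v L ih =>
    rintro x ⟨c, hc, z, hz, rfl⟩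
    exact hS.2.1 _ (hS.2.2 c hc v (h v (List.mem_cons_self))) _
      (ih (fun w hw => h w (List.mem_cons_of_mem _ hw)) hz)

lemma isCone_coneList (L : List W) : IsCone (coneList L) := by
  refine ⟨zero_mem_coneList L, ?_, ?_⟩
  · induction L with
    | nil =>
      intro x hx y hy
      simp only [coneList, Set.mem_singleton_iff] at hx hy ⊢
      simp [hx, hy]
    | cons v L ih =>
      rintro x ⟨c, hc, z, hz, rfl⟩ y ⟨c', hc', z', hz', rfl⟩
      exact ⟨c + c', by linarith, z + z', ih z hz z' hz', by module⟩
  · induction L with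
    | nil =>
      intro c _ x hx
      simp only [coneList, Set.mem_singleton_iff] at hx ⊢
      simp [hx]
    | cons v L ih =>
      rintro c hc x ⟨d, hd, z, hz, rfl⟩
      exact ⟨c * d, mul_nonneg hc hd, c • z, ih c hc z hz, by module⟩

lemma mem_coneList_of_mem {L : List W} {v : W} (h : v ∈ L) : v ∈ coneList L := by
  induction L with
  | nil => cases h
  | cons w L ih =>
    rcases List.mem_cons.mp h with h | h
    · exact ⟨1, by norm_num, 0, zero_mem_coneList L, by simp [h]⟩
    · exact ⟨0, le_refl _, v, ih h, by simp⟩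

lemma coneList_mono' {L L' : List W} (h : ∀ v ∈ L, v ∈ L') : coneList L ⊆ coneList L' :=
  coneList_subset (isCone_coneList L') (fun v hv => mem_coneList_of_mem (h v hv))

lemma sum_mem_coneList (L : List W) : L.sum ∈ coneList L := by
  induction L with
  | nil => simp [zero_mem_coneList]
  | cons v L ih => exact ⟨1, by norm_num, L.sum, ih, by simp⟩

end Cone
section Cone2
variable {W : Type*} [AddCommGroup W] [Module ℚ W]

lemma coneList_nonneg {φ : Module.Dual ℚ W} {L : List W} (hL : ∀ v ∈ L, 0 ≤ φ v) :
    ∀ y ∈ coneList L, 0 ≤ φ y := by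
  intro y hy
  refine coneList_subset (S := {x | 0 ≤ φ x}) ⟨by simp, ?_, ?_⟩ hL hy
  · intro x hx z hz; simp only [Set.mem_setOf_eq, map_add] at *; linarith
  · intro c hc x hx; simp only [Set.mem_setOf_eq, map_smul, smul_eq_mul] at *; positivity

lemma mem_coneList_filter {φ : Module.Dual ℚ W} {L : List W} (hL : ∀ v ∈ L, 0 ≤ φ v)
    {y : W} (hy : y ∈ coneList L) (h0 : φ y = 0) :
    y ∈ coneList (L.filter (fun v => decide (φ v = 0))) := by
  classical
  induction L generalizing y with
  | nil => exact hy
  | cons v L ih =>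
    obtain ⟨c, hc, z, hz, rfl⟩ := hy
    have hφv : 0 ≤ φ v := hL v (List.mem_cons_self)
    have hφz : 0 ≤ φ z := coneList_nonneg (fun w hw => hL w (List.mem_cons_of_mem _ hw)) z hz
    have hsum : c * φ v + φ z = 0 := by
      have := h0; simp only [map_add, map_smul, smul_eq_mul] at this; linarith
    have hcv : c * φ v = 0 := by nlinarith
    have hz0 : φ z = 0 := by linarith
    have hz' := ih (fun w hw => hL w (List.mem_cons_of_mem _ hw)) hz hz0
    by_cases hv0 : φ v = 0
    · have : (v :: L).filter (fun v => decide (φ v = 0)) =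
        v :: (L.filter (fun v => decide (φ v = 0))) := by simp [List.filter_cons, hv0]
      rw [this]
      exact ⟨c, hc, _, hz', rfl⟩
    · have hc0 : c = 0 := by
        rcases mul_eq_zero.mp hcv with h | h
        · exact h
        · exact absurd h hv0
      have : (v :: L).filter (fun v => decide (φ v = 0)) =
        L.filter (fun v => decide (φ v = 0)) := by simp [List.filter_cons, hv0]
      rw [this, hc0]
      simpa using hz'
end Cone2
section Weyl
variable {W : Type*} [AddCommGroup W] [Module ℚ W]

theorem weyl [FiniteDimensional ℚ W] (L : List W) :
    ∃ t : Finset (Module.Dual ℚ W), coneList L = {x | ∀ l ∈ t, 0 ≤ l x} := by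
  classical
  induction L with
  | nil =>
    let b := Module.finBasis ℚ W
    refine ⟨(Finset.univ.image fun i => b.coord i) ∪ (Finset.univ.image fun i => -b.coord i), ?_⟩
    ext x
    simp only [coneList, Set.mem_singleton_iff, Set.mem_setOf_eq]
    constructor
    · rintro rfl l _; simp
    · intro h
      have hco : ∀ i, b.coord i x = 0 := by
        intro i
        have h1 := h (b.coord i) (Finset.mem_union_left _ (Finset.mem_image_of_mem _ (Finset.mem_univ i)))
        have h2 := h (-b.coord i) (Finset.mem_union_right _ (Finset.mem_image_of_mem _ (Finset.mem_univ i)))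
        simp only [LinearMap.neg_apply, Left.nonneg_neg_iff] at h2
        linarith
      exact (b.forall_coord_eq_zero_iff).mp hco
  | cons v L ih =>
    obtain ⟨t, ht⟩ := ih
    set t0 := t.filter (fun l => 0 ≤ l v) with ht0
    set tp := t.filter (fun l => 0 < l v) with htp
    set tn := t.filter (fun l => l v < 0) with htn
    refine ⟨t0 ∪ (tp ×ˢ tn).image (fun q => (q.1 v) • q.2 - (q.2 v) • q.1), ?_⟩
    ext x
    simp only [Set.mem_setOf_eq]
    constructor
    · rintro ⟨c, hc, z, hz, rfl⟩
      rw [ht] at hz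
      intro l hl
      rcases Finset.mem_union.mp hl with hl | hl
      · obtain ⟨hlt, hlv⟩ := Finset.mem_filter.mp hl
        have := hz l hlt
        simp only [map_add, map_smul, smul_eq_mul]
        nlinarith
      · obtain ⟨⟨lp, ln⟩, hmem, rfl⟩ := Finset.mem_image.mp hl
        obtain ⟨hlp, hln⟩ := Finset.mem_product.mp hmem
        obtain ⟨hlpt, hlpv⟩ := Finset.mem_filter.mp hlp
        obtain ⟨hlnt, hlnv⟩ := Finset.mem_filter.mp hln
        have h1 := hz lp hlpt
        have h2 := hz ln hlnt
        simp only [LinearMap.sub_apply, LinearMap.smul_apply, map_add, map_smul, smul_eq_mul]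
        nlinarith
    · intro hx
      have key : ∃ c : ℚ, 0 ≤ c ∧ ∀ l ∈ t, c * l v ≤ l x := by
        by_cases hp : tp.Nonempty
        · obtain ⟨l₀, hl₀mem, hl₀⟩ := Finset.exists_mem_eq_inf' hp (fun l => l x / l v)
          obtain ⟨hl₀t, hl₀v⟩ := Finset.mem_filter.mp hl₀mem
          have hl₀x : 0 ≤ l₀ x := hx l₀ (Finset.mem_union_left _
            (Finset.mem_filter.mpr ⟨hl₀t, le_of_lt hl₀v⟩))
          refine ⟨l₀ x / l₀ v, div_nonneg hl₀x (le_of_lt hl₀v), ?_⟩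
          intro l hlt
          rcases lt_trichotomy (l v) 0 with hlv | hlv | hlv
          · have hpair := hx ((l₀ v) • l - (l v) • l₀) (Finset.mem_union_right _
              (Finset.mem_image.mpr ⟨(l₀, l), Finset.mem_product.mpr
                ⟨Finset.mem_filter.mpr ⟨hl₀t, hl₀v⟩, Finset.mem_filter.mpr ⟨hlt, hlv⟩⟩, rfl⟩))
            simp only [LinearMap.sub_apply, LinearMap.smul_apply, smul_eq_mul] at hpair
            rw [div_mul_eq_mul_div, div_le_iff₀ hl₀v]
            nlinarith
          · rw [hlv, mul_zero]
            exact hx l (Finset.mem_union_left _ (Finset.mem_filter.mpr ⟨hlt, le_of_eq hlv.symm⟩))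
          · have hle : l₀ x / l₀ v ≤ l x / l v := by
              rw [← hl₀]
              exact Finset.inf'_le _ (Finset.mem_filter.mpr ⟨hlt, hlv⟩)
            rw [← le_div_iff₀ hlv]
            exact hle
        · by_cases hn : tn.Nonempty
          · refine ⟨max 0 (tn.sup' hn (fun l => l x / l v)), le_max_left _ _, ?_⟩
            intro l hlt
            rcases lt_trichotomy (l v) 0 with hlv | hlv | hlv
            · have hmemn : l ∈ tn := by rw [htn]; exact Finset.mem_filter.mpr ⟨hlt, hlv⟩
              have hle : l x / l v ≤ max 0 (tn.sup' hn (fun l => l x / l v)) :=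
                le_trans (Finset.le_sup' (fun l => l x / l v) hmemn) (le_max_right _ _)
              rw [div_le_iff_of_neg hlv] at hle
              exact hle
            · rw [hlv, mul_zero]
              exact hx l (Finset.mem_union_left _ (Finset.mem_filter.mpr ⟨hlt, le_of_eq hlv.symm⟩))
            · exact absurd ⟨l, Finset.mem_filter.mpr ⟨hlt, hlv⟩⟩ hp
          · refine ⟨0, le_refl _, ?_⟩
            intro l hlt
            rcases lt_trichotomy (l v) 0 with hlv | hlv | hlv
            · exact absurd ⟨l, Finset.mem_filter.mpr ⟨hlt, hlv⟩⟩ hn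
            · rw [zero_mul]
              exact hx l (Finset.mem_union_left _ (Finset.mem_filter.mpr ⟨hlt, le_of_eq hlv.symm⟩))
            · exact absurd ⟨l, Finset.mem_filter.mpr ⟨hlt, hlv⟩⟩ hp
      obtain ⟨c, hc, hcl⟩ := key
      refine ⟨c, hc, x - c • v, ?_, by module⟩
      rw [ht]
      intro l hlt
      have := hcl l hlt
      simp only [Set.mem_setOf_eq, map_sub, map_smul, smul_eq_mul]
      linarith
end Weyl
section FarkasMinkowski
variable {W : Type*} [AddCommGroup W] [Module ℚ W]

theorem farkas' [FiniteDimensional ℚ W] (L : List W) (x : W) (hx : x ∉ coneList L) :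
    ∃ y : Module.Dual ℚ W, (∀ m ∈ L, 0 ≤ y m) ∧ y x < 0 := by
  obtain ⟨t, ht⟩ := weyl L
  rw [ht] at hx
  simp only [Set.mem_setOf_eq, not_forall, not_le] at hx
  obtain ⟨l, hlt, hlx⟩ := hx
  refine ⟨l, ?_, by linarith⟩
  intro m hm
  have : m ∈ coneList L := mem_coneList_of_mem hm
  rw [ht] at this
  exact this l hlt

theorem minkowski [FiniteDimensional ℚ W] (t : Finset (Module.Dual ℚ W)) :
    ∃ L : List W, {x | ∀ l ∈ t, 0 ≤ l x} = coneList L := by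
  obtain ⟨u, hu⟩ := weyl (W := Module.Dual ℚ W) t.toList
  refine ⟨u.toList.map (fun M => (Module.evalEquiv ℚ W).symm M), ?_⟩
  apply Set.Subset.antisymm
  · intro x hx
    by_contra hmem
    obtain ⟨y, hy1, hy2⟩ := farkas' _ x hmem
    have hyK : y ∈ coneList t.toList := by
      rw [hu]
      intro M hM
      have := hy1 ((Module.evalEquiv ℚ W).symm M) (List.mem_map.mpr ⟨M, Finset.mem_toList.mpr hM, rfl⟩)
      rwa [Module.apply_evalEquiv_symm_apply] at this
    have : 0 ≤ y x := by
      refine coneList_subset (S := {z : Module.Dual ℚ W | 0 ≤ z x}) ⟨by simp, ?_, ?_⟩ ?_ hyK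
      · intro a ha b hb; simp only [Set.mem_setOf_eq, LinearMap.add_apply] at *; linarith
      · intro c hc a ha; simp only [Set.mem_setOf_eq, LinearMap.smul_apply, smul_eq_mul] at *; positivity
      · intro l hl
        exact hx l (Finset.mem_toList.mp hl)
    linarith
  · refine coneList_subset ⟨?_, ?_, ?_⟩ ?_
    · simp
    · intro a ha b hb l hl
      have := ha l hl; have := hb l hl
      simp only [map_add]; linarith
    · intro c hc a ha l hl
      have := ha l hl
      simp only [map_smul, smul_eq_mul]; positivity
    · rintro m hm l hl
      obtain ⟨M, hM, rfl⟩ := List.mem_map.mp hm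
      have hlK : l ∈ coneList t.toList := mem_coneList_of_mem (Finset.mem_toList.mpr hl)
      rw [hu] at hlK
      rw [Module.apply_evalEquiv_symm_apply]
      exact hlK M (Finset.mem_toList.mp hM)
end FarkasMinkowski

theorem relint_nonempty {W : Type*} [AddCommGroup W] [Module ℚ W] [FiniteDimensional ℚ W]
    {F : Set W} (hne : F.Nonempty) (hconv : Convex ℚ F) : (relint F).Nonempty := by
  classical
  obtain ⟨x₀, hx₀⟩ := hne
  set S : Set W := (fun p => p - x₀) '' F with hS
  obtain ⟨b, hbS, hspan, hli⟩ := exists_linearIndependent ℚ S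
  have hfin : b.Finite := hli.setFinite
  set b' : Finset W := hfin.toFinset with hb'
  have hb'S : ∀ v ∈ b', ∃ f ∈ F, v = f - x₀ := by
    intro v hv
    have : v ∈ S := hbS (hfin.mem_toFinset.mp hv)
    obtain ⟨f, hf, hfv⟩ := this
    exact ⟨f, hf, hfv.symm⟩
  choose! f hfF hfv using hb'S
  set n : ℕ := b'.card with hn
  have hn1 : (0:ℚ) < (n:ℚ) + 1 := by positivity
  -- generic convex combination lemma
  have hcomb : ∀ μ : W → ℚ, (∀ v ∈ b', 0 ≤ μ v) → (∑ v ∈ b', μ v) ≤ 1 →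
      x₀ + ∑ v ∈ b', μ v • v ∈ F := by
    intro μ hμ0 hμ1
    have hkey : ∑ i ∈ insert none (b'.image some), (fun o => Option.elim o (1 - ∑ v ∈ b', μ v) μ) i
        • (fun o => Option.elim o x₀ f) i ∈ F := by
      apply hconv.sum_mem
      · intro i hi
        rcases Finset.mem_insert.mp hi with rfl | hi
        · simp only [Option.elim]; linarith
        · obtain ⟨v, hv, rfl⟩ := Finset.mem_image.mp hi
          exact hμ0 v hv
      · rw [Finset.sum_insert (by simp), Finset.sum_image (by simp)]
        simp only [Option.elim]
        ring
      · intro i hi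
        rcases Finset.mem_insert.mp hi with rfl | hi
        · exact hx₀
        · obtain ⟨v, hv, rfl⟩ := Finset.mem_image.mp hi
          exact hfF v hv
    rw [Finset.sum_insert (by simp), Finset.sum_image (by simp)] at hkey
    simp only [Option.elim] at hkey
    have heq : (1 - ∑ v ∈ b', μ v) • x₀ + ∑ v ∈ b', μ v • f v
        = x₀ + ∑ v ∈ b', μ v • v := by
      have : ∀ v ∈ b', μ v • f v = μ v • v + μ v • x₀ := by
        intro v hv
        rw [← smul_add]
        congr 1
        exact (eq_sub_iff_add_eq.mp (hfv v hv)).symm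
      rw [Finset.sum_congr rfl this, Finset.sum_add_distrib, ← Finset.sum_smul, sub_smul, one_smul]
      abel
    rwa [heq] at hkey
  set xs : W := x₀ + (((n:ℚ)+1)⁻¹) • ∑ v ∈ b', v with hxs
  have hsum1 : (∑ _v ∈ b', ((n:ℚ)+1)⁻¹) ≤ 1 := by
    rw [Finset.sum_const, ← hn, nsmul_eq_mul, ← div_eq_mul_inv, div_le_one hn1]
    linarith
  have hxsF : xs ∈ F := by
    have h := hcomb (fun _ => ((n:ℚ)+1)⁻¹) (fun v _ => by positivity) hsum1
    rwa [← Finset.smul_sum] at h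
  refine ⟨xs, hxsF, ?_⟩
  intro y hy
  -- x* - y lies in the span of b'
  have hspan' : ∀ z ∈ F, z - x₀ ∈ Submodule.span ℚ (b' : Set W) := by
    intro z hz
    have h1 : z - x₀ ∈ S := ⟨z, hz, rfl⟩
    have h2 : z - x₀ ∈ Submodule.span ℚ S := Submodule.subset_span h1
    rw [← hspan] at h2
    rwa [hb', Set.Finite.coe_toFinset]
  have hd : xs - y ∈ Submodule.span ℚ (b' : Set W) := by
    have h1 := hspan' xs hxsF
    have h2 := hspan' y hy
    have := Submodule.sub_mem _ h1 h2
    simpa using this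
  obtain ⟨c, -, hc⟩ := Submodule.mem_span_finset.mp hd
  set B : ℚ := 1 + ∑ v ∈ b', |c v| with hB
  have hBpos : 0 < B := by
    have : (0:ℚ) ≤ ∑ v ∈ b', |c v| := Finset.sum_nonneg (fun v _ => abs_nonneg _)
    rw [hB]; linarith
  set ε : ℚ := (((n:ℚ)+1) * B)⁻¹ with hε
  have hεpos : 0 < ε := by rw [hε]; positivity
  refine ⟨ε, hεpos, ?_⟩
  have hcle : ∀ v ∈ b', |c v| ≤ B := by
    intro v hv
    have := Finset.single_le_sum (f := fun v => |c v|) (fun w _ => abs_nonneg _) hv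
    rw [hB]; linarith
  have hεB : ε * B = ((n:ℚ)+1)⁻¹ := by
    rw [hε, mul_inv, mul_assoc, inv_mul_cancel₀ (ne_of_gt hBpos), mul_one]
  set μ : W → ℚ := fun v => ((n:ℚ)+1)⁻¹ + ε * c v with hμ
  have hμ0 : ∀ v ∈ b', 0 ≤ μ v := by
    intro v hv
    have h1 : ε * c v ≥ -(ε * |c v|) := by
      have := neg_abs_le (c v); nlinarith
    have h2 : ε * |c v| ≤ ε * B := by
      have := hcle v hv; nlinarith
    rw [hμ]; simp only; rw [hεB] at h2; linarith
  have hμsum : (∑ v ∈ b', μ v) ≤ 1 := by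
    rw [hμ]
    simp only
    rw [Finset.sum_add_distrib, ← Finset.mul_sum]
    have h1 : |∑ v ∈ b', c v| ≤ ∑ v ∈ b', |c v| := Finset.abs_sum_le_sum_abs _ _
    have h2 : ε * (∑ v ∈ b', c v) ≤ ε * B := by
      have h3 : (∑ v ∈ b', c v) ≤ B := by
        have := le_abs_self (∑ v ∈ b', c v); rw [hB]; linarith
      nlinarith
    rw [hεB] at h2
    have h0 : (∑ _v ∈ b', ((n:ℚ)+1)⁻¹) = (n:ℚ) * ((n:ℚ)+1)⁻¹ := by
      rw [Finset.sum_const, ← hn, nsmul_eq_mul]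
    have h4 : (n:ℚ) * ((n:ℚ)+1)⁻¹ + ((n:ℚ)+1)⁻¹ = 1 := by
      linear_combination mul_inv_cancel₀ (ne_of_gt hn1)
    linarith
  have hmem := hcomb μ hμ0 hμsum
  have heq : x₀ + ∑ v ∈ b', μ v • v = xs + ε • (xs - y) := by
    rw [hμ]
    simp only
    have : ∀ v ∈ b', (((n:ℚ)+1)⁻¹ + ε * c v) • v = ((n:ℚ)+1)⁻¹ • v + ε • (c v • v) := by
      intro v _
      rw [add_smul, smul_smul]
    rw [Finset.sum_congr rfl this, Finset.sum_add_distrib, ← Finset.smul_sum, ← Finset.smul_sum,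
      hc]
    rw [hxs]
    abel
  rwa [heq] at hmem


section CondMin
def condMin {α : Type*} (l : List α) (Q : α → Bool) (g : α → ℚ) : ℚ :=
  l.foldr (fun a e => if Q a then min e (g a) else e) 1

lemma condMin_pos {α : Type*} {l : List α} {Q : α → Bool} {g : α → ℚ}
    (h : ∀ a ∈ l, Q a = true → 0 < g a) : 0 < condMin l Q g := by
  induction l with
  | nil => norm_num [condMin]
  | cons a l ih =>
    have ih' := ih (fun b hb hQ => h b (List.mem_cons_of_mem _ hb) hQ)
    simp only [condMin, List.foldr_cons]
    by_cases hQ : Q a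
    · rw [if_pos hQ]
      exact lt_min ih' (h a (List.mem_cons_self) hQ)
    · rw [if_neg hQ]; exact ih'

lemma condMin_le {α : Type*} {l : List α} {Q : α → Bool} {g : α → ℚ} :
    ∀ a ∈ l, Q a = true → condMin l Q g ≤ g a := by
  induction l with
  | nil => intro a ha; cases ha
  | cons b l ih =>
    intro a ha hQ
    simp only [condMin, List.foldr_cons]
    rcases List.mem_cons.mp ha with rfl | ha
    · rw [if_pos hQ]; exact min_le_right _ _
    · have := ih a ha hQ
      by_cases hQb : Q b
      · rw [if_pos hQb]; exact le_trans (min_le_left _ _) this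
      · rw [if_neg hQb]; exact this
end CondMin

section Polyhedra
variable {V : Type*} [AddCommGroup V] [Module ℚ V]

/-- On a subset `F` with a relative-interior point `x₀`, any functional minimized (over `P ⊇ F`)
at `x₀` is constant on `F`. -/
lemma const_on_of_relint {P F : Set V} (hFP : F ⊆ P) {x₀ : V} (hx₀ : x₀ ∈ relint F)
    {c : Module.Dual ℚ V} (hmin : ∀ p ∈ P, c x₀ ≤ c p) : ∀ x ∈ F, c x = c x₀ := by
  intro x hx
  obtain ⟨hx₀F, hrel⟩ := hx₀
  obtain ⟨ε, hε, hmem⟩ := hrel x hx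
  have h1 := hmin _ (hFP hmem)
  have h2 := hmin x (hFP hx)
  simp only [map_add, map_smul, map_sub, smul_eq_mul] at h1
  nlinarith

/-- Lemma B: the normal cone of `F` equals the normal cone at a relative interior point. -/
lemma normalCone_eq_point {P F : Set V} (hFP : F ⊆ P) {x₀ : V} (hx₀ : x₀ ∈ relint F) :
    normalCone P F = {y : Module.Dual ℚ V | ∀ p ∈ P, y x₀ ≤ y p} := by
  ext y
  constructor
  · intro hy p hp
    exact hy x₀ hx₀.1 p hp
  · intro hy x hx p hp
    rw [const_on_of_relint hFP hx₀ hy x hx]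
    exact hy p hp

variable (s : Finset (Module.Dual ℚ V × ℚ))

/-- The structure theorem: the normal cone at a point of a polyhedron is the finitely
generated cone on the active constraints. -/
theorem normalCone_point_eq_coneList [FiniteDimensional ℚ V] {x₀ : V}
    (hx₀ : x₀ ∈ {x : V | ∀ p ∈ s, p.2 ≤ p.1 x}) :
    {y : Module.Dual ℚ V | ∀ p ∈ {x : V | ∀ p ∈ s, p.2 ≤ p.1 x}, y x₀ ≤ y p} =
      coneList ((s.toList.filter (fun p => decide (p.1 x₀ = p.2))).map Prod.fst) := by
  classical
  set P : Set V := {x : V | ∀ p ∈ s, p.2 ≤ p.1 x} with hPdef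
  set L : List (Module.Dual ℚ V) :=
    (s.toList.filter (fun p => decide (p.1 x₀ = p.2))).map Prod.fst with hL
  have hGen : ∀ a ∈ L, ∃ b : ℚ, a x₀ = b ∧ ∀ p ∈ P, b ≤ a p := by
    intro a ha
    rw [hL] at ha
    obtain ⟨q, hq, rfl⟩ := List.mem_map.mp ha
    have hq' := List.mem_filter.mp hq
    have hqs : q ∈ s := Finset.mem_toList.mp hq'.1
    have hact : q.1 x₀ = q.2 := of_decide_eq_true hq'.2
    exact ⟨q.2, hact, fun p hp => hp q hqs⟩
  apply Set.Subset.antisymm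
  · intro y hy
    by_contra hmem
    obtain ⟨ψ, hψ1, hψ2⟩ := farkas' L y hmem
    set v : V := (Module.evalEquiv ℚ V).symm ψ with hv
    have hav : ∀ a ∈ L, 0 ≤ a v := by
      intro a ha
      rw [hv, Module.apply_evalEquiv_symm_apply]
      exact hψ1 a ha
    have hyv : y v < 0 := by
      rw [hv, Module.apply_evalEquiv_symm_apply]
      exact hψ2
    set δ : ℚ := condMin s.toList (fun p => decide (p.1 v < 0))
      (fun p => (p.1 x₀ - p.2) / (-(p.1 v))) with hδ
    have hδpos : 0 < δ := by
      apply condMin_pos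
      intro q hq hQ
      have hqv : q.1 v < 0 := of_decide_eq_true hQ
      have hqs : q ∈ s := Finset.mem_toList.mp hq
      have hstrict : q.2 < q.1 x₀ := by
        rcases lt_or_eq_of_le (hx₀ q hqs) with h | h
        · exact h
        · exfalso
          have : q.1 ∈ L := by
            rw [hL]
            exact List.mem_map.mpr ⟨q, List.mem_filter.mpr
              ⟨Finset.mem_toList.mpr hqs, decide_eq_true h.symm⟩, rfl⟩
          exact absurd (hav q.1 this) (not_le.mpr hqv)
      have h0 : 0 < -(q.1 v) := by linarith
      exact div_pos (by linarith) h0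
    have hmem' : x₀ + δ • v ∈ P := by
      intro q hqs
      simp only [map_add, map_smul, smul_eq_mul]
      rcases lt_or_ge (q.1 v) 0 with hqv | hqv
      · have hle : δ ≤ (q.1 x₀ - q.2) / (-(q.1 v)) :=
          condMin_le q (Finset.mem_toList.mpr hqs) (decide_eq_true hqv)
        rw [le_div_iff₀ (by linarith : (0:ℚ) < -(q.1 v))] at hle
        nlinarith
      · have := hx₀ q hqs
        nlinarith
    have := hy _ hmem'
    simp only [map_add, map_smul, smul_eq_mul] at this
    nlinarith
  · apply coneList_subset
    · refine ⟨?_, ?_, ?_⟩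
      · intro p _; simp
      · intro a ha b hb p hp
        have := ha p hp; have := hb p hp
        simp only [LinearMap.add_apply] at *
        linarith
      · intro c hc a ha p hp
        have := ha p hp
        simp only [LinearMap.smul_apply, smul_eq_mul] at *
        nlinarith
    · intro a ha p hp
      obtain ⟨b, hab, hbp⟩ := hGen a ha
      rw [hab]
      exact hbp p hp

end Polyhedra


section RatioBound
variable {V : Type*} [AddCommGroup V] [Module ℚ V]

/-- Key finiteness lemma: if a functional `y₀` is minimized at `x₀` over a polyhedron `P`, and
another functional `c` (also minimized at `x₀`) is constant wherever `y₀` attains its minimum,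
then `c - c x₀` is linearly dominated by `y₀ - y₀ x₀` on `P`. -/
theorem ratio_bound [FiniteDimensional ℚ V] (s : Finset (Module.Dual ℚ V × ℚ))
    {x₀ : V} (hx₀ : x₀ ∈ {x : V | ∀ p ∈ s, p.2 ≤ p.1 x})
    {y₀ c : Module.Dual ℚ V}
    (hy₀ : ∀ p ∈ {x : V | ∀ p ∈ s, p.2 ≤ p.1 x}, y₀ x₀ ≤ y₀ p)
    (hc : ∀ p ∈ {x : V | ∀ p ∈ s, p.2 ≤ p.1 x}, c x₀ ≤ c p)
    (himp : ∀ p ∈ {x : V | ∀ p ∈ s, p.2 ≤ p.1 x}, y₀ p = y₀ x₀ → c p = c x₀) :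
    ∃ ε : ℚ, 0 < ε ∧ ∀ p ∈ {x : V | ∀ p ∈ s, p.2 ≤ p.1 x},
      ε * (c p - c x₀) ≤ y₀ p - y₀ x₀ := by
  classical
  set P : Set V := {x : V | ∀ p ∈ s, p.2 ≤ p.1 x} with hPdef
  -- the homogenization cone in V × ℚ
  set ext : Module.Dual ℚ V → ℚ → Module.Dual ℚ (V × ℚ) :=
    (fun a r => a.coprod (r • (LinearMap.id : ℚ →ₗ[ℚ] ℚ))) with hext
  have hext_apply : ∀ (a : Module.Dual ℚ V) (r : ℚ) (x : V) (t : ℚ),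
      ext a r (x, t) = a x + r * t := by
    intro a r x t
    simp [hext, LinearMap.coprod_apply, smul_eq_mul]
  set u : Finset (Module.Dual ℚ (V × ℚ)) :=
    insert (ext 0 1) (s.image (fun p => ext p.1 (-p.2))) with hu
  set Chat : Set (V × ℚ) := {w | ∀ l ∈ u, 0 ≤ l w} with hChat
  have hChat_mem : ∀ x : V, ∀ t : ℚ, ((x, t) ∈ Chat ↔ (0 ≤ t ∧ ∀ q ∈ s, q.2 * t ≤ q.1 x)) := by
    intro x t
    constructor
    · intro h
      constructor
      · have := h (ext 0 1) (Finset.mem_insert_self _ _)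
        rwa [hext_apply, LinearMap.zero_apply, zero_add, one_mul] at this
      · intro q hq
        have := h (ext q.1 (-q.2)) (Finset.mem_insert_of_mem (Finset.mem_image_of_mem _ hq))
        rw [hext_apply] at this
        linarith
    · intro ⟨ht, hq⟩ l hl
      rcases Finset.mem_insert.mp hl with rfl | hl
      · rw [hext_apply, LinearMap.zero_apply, zero_add, one_mul]; exact ht
      · obtain ⟨q, hqs, rfl⟩ := Finset.mem_image.mp hl
        rw [hext_apply]
        have := hq q hqs
        linarith
  set yhat : Module.Dual ℚ (V × ℚ) := ext y₀ (-(y₀ x₀)) with hyhat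
  set chat : Module.Dual ℚ (V × ℚ) := ext c (-(c x₀)) with hchat
  -- key pointwise facts on the cone
  have hkey : ∀ w ∈ Chat, (0 ≤ yhat w ∧ 0 ≤ chat w ∧ (yhat w = 0 → chat w = 0)) := by
    rintro ⟨x, t⟩ hw
    obtain ⟨ht, hq⟩ := (hChat_mem x t).mp hw
    rw [hyhat, hchat, hext_apply, hext_apply]
    rcases lt_or_eq_of_le ht with ht' | ht'
    · -- t > 0 : x/t ∈ P
      have hxt : t⁻¹ • x ∈ P := by
        intro q hqs
        have := hq q hqs
        rw [map_smul, smul_eq_mul, inv_mul_eq_div, le_div_iff₀ ht']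
        linarith
      have h1 : y₀ x₀ ≤ y₀ (t⁻¹ • x) := hy₀ _ hxt
      have h2 : c x₀ ≤ c (t⁻¹ • x) := hc _ hxt
      rw [map_smul, smul_eq_mul, inv_mul_eq_div, le_div_iff₀ ht'] at h1 h2
      refine ⟨by linarith, by linarith, ?_⟩
      intro h0
      have hti : t⁻¹ * t = 1 := inv_mul_cancel₀ (ne_of_gt ht')
      have hyx : y₀ (t⁻¹ • x) = y₀ x₀ := by
        rw [map_smul, smul_eq_mul]
        linear_combination t⁻¹ * h0 + y₀ x₀ * hti
      have hcx := himp _ hxt hyx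
      rw [map_smul, smul_eq_mul, inv_mul_eq_div, div_eq_iff (ne_of_gt ht')] at hcx
      linarith
    · -- t = 0 : x is a recession direction
      subst ht'
      have hxx : x₀ + x ∈ P := by
        intro q hqs
        have h1 := hq q hqs
        have h2 := hx₀ q hqs
        rw [map_add]
        linarith
      have h1 := hy₀ _ hxx
      have h2 := hc _ hxx
      rw [map_add] at h1 h2
      refine ⟨by linarith, by linarith, ?_⟩
      intro h0
      have : y₀ (x₀ + x) = y₀ x₀ := by rw [map_add]; linarith
      have := himp _ hxx this
      rw [map_add] at this
      linarith
  obtain ⟨Wl, hWl⟩ := minkowski u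
  rw [← hChat] at hWl
  set ε : ℚ := condMin Wl (fun w => decide (0 < chat w)) (fun w => yhat w / chat w) with hε
  have hεpos : 0 < ε := by
    apply condMin_pos
    intro w hwl hQ
    have hcw : 0 < chat w := of_decide_eq_true hQ
    have hwC : w ∈ Chat := by rw [hWl]; exact mem_coneList_of_mem hwl
    obtain ⟨h1, h2, h3⟩ := hkey w hwC
    have : yhat w ≠ 0 := fun h0 => by rw [h3 h0] at hcw; exact lt_irrefl _ hcw
    have : 0 < yhat w := lt_of_le_of_ne h1 (Ne.symm this)
    positivity
  have hdom : ∀ w ∈ Chat, ε * chat w ≤ yhat w := by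
    intro w hw
    rw [hWl] at hw
    refine coneList_subset (S := {w | ε * chat w ≤ yhat w}) ⟨?_, ?_, ?_⟩ ?_ hw
    · simp
    · intro a ha b hb
      simp only [Set.mem_setOf_eq, map_add] at *
      linarith
    · intro d hd a ha
      simp only [Set.mem_setOf_eq, map_smul, smul_eq_mul] at *
      nlinarith
    · intro w' hwl
      have hwC : w' ∈ Chat := by rw [hWl]; exact mem_coneList_of_mem hwl
      obtain ⟨h1, h2, _⟩ := hkey w' hwC
      simp only [Set.mem_setOf_eq]
      rcases lt_or_ge 0 (chat w') with hcw | hcw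
      · have hle : ε ≤ yhat w' / chat w' := condMin_le w' hwl (decide_eq_true hcw)
        rw [le_div_iff₀ hcw] at hle
        exact hle
      · nlinarith
  refine ⟨ε, hεpos, ?_⟩
  intro p hp
  have hpC : ((p, 1) : V × ℚ) ∈ Chat := by
    rw [hChat_mem]
    exact ⟨by norm_num, fun q hq => by rw [mul_one]; exact hp q hq⟩
  have := hdom _ hpC
  rw [hyhat, hchat, hext_apply, hext_apply] at this
  nlinarith
end RatioBound


section MainAux
variable {V : Type*} [AddCommGroup V] [Module ℚ V]

lemma list_sum_apply (L : List (Module.Dual ℚ V)) (x : V) :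
    L.sum x = (L.map (fun a => a x)).sum := by
  induction L with
  | nil => simp
  | cons a L ih => simp [LinearMap.add_apply, ih]

lemma list_sum_eq_zero_of_nonneg {l : List ℚ} (h : ∀ r ∈ l, 0 ≤ r) (h0 : l.sum = 0) :
    ∀ r ∈ l, r = 0 := by
  induction l with
  | nil => intro r hr; cases hr
  | cons a l ih =>
    have ha : 0 ≤ a := h a (List.mem_cons_self)
    have hl : 0 ≤ l.sum := List.sum_nonneg (fun r hr => h r (List.mem_cons_of_mem _ hr))
    rw [List.sum_cons] at h0
    have ha0 : a = 0 := by linarith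
    have hl0 : l.sum = 0 := by linarith
    intro r hr
    rcases List.mem_cons.mp hr with rfl | hr
    · exact ha0
    · exact ih (fun r hr => h r (List.mem_cons_of_mem _ hr)) hl0 r hr

lemma isCone_normalCone (P F : Set V) : IsCone (normalCone P F) := by
  refine ⟨?_, ?_, ?_⟩
  · intro x _ p _; simp
  · intro y hy z hz x hx p hp
    have := hy x hx p hp; have := hz x hx p hp
    simp only [LinearMap.add_apply]; linarith
  · intro c hc y hy x hx p hp
    have := hy x hx p hp
    simp only [LinearMap.smul_apply, smul_eq_mul]; nlinarith

lemma convex_polyFace (s : Finset (Module.Dual ℚ V × ℚ)) (y : Module.Dual ℚ V) :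
    Convex ℚ {x ∈ {x : V | ∀ p ∈ s, p.2 ≤ p.1 x} | ∀ p ∈ {x : V | ∀ p ∈ s, p.2 ≤ p.1 x}, y x ≤ y p} := by
  intro x hx z hz a b ha hb hab
  constructor
  · intro q hq
    have h1 := hx.1 q hq; have h2 := hz.1 q hq
    simp only [map_add, map_smul, smul_eq_mul]
    have h3 : a * q.2 + b * q.2 = q.2 := by linear_combination q.2 * hab
    nlinarith [mul_le_mul_of_nonneg_left h1 ha, mul_le_mul_of_nonneg_left h2 hb]
  · intro p hp
    have h1 := hx.2 p hp; have h2 := hz.2 p hp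
    simp only [map_add, map_smul, smul_eq_mul]
    have h3 : a * y p + b * y p = y p := by linear_combination (y p) * hab
    nlinarith [mul_le_mul_of_nonneg_left h1 ha, mul_le_mul_of_nonneg_left h2 hb]
end MainAux


/-- The collection of normal cones `N_F P` of the faces of a polyhedron `P` forms a fan:
each normal cone is a polyhedral cone, every face of a normal cone is again a normal cone
of a face of `P`, and the intersection of two normal cones is a common face of both. -/
theorem normal_fan_is_fan
    (V : Type*) [AddCommGroup V] [Module ℚ V] [FiniteDimensional ℚ V]
    (P : Set V) (hP : IsPolyhedron P) (hne : P.Nonempty) :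
    (∀ F : Set V, IsFaceOf P F → IsPolyhedralCone (normalCone P F)) ∧
    (∀ F : Set V, IsFaceOf P F → ∀ C : Set (Module.Dual ℚ V),
      IsConeFace (normalCone P F) C → ∃ G : Set V, IsFaceOf P G ∧ C = normalCone P G) ∧
    (∀ F G : Set V, IsFaceOf P F → IsFaceOf P G →
      IsConeFace (normalCone P F) (normalCone P F ∩ normalCone P G) ∧
      IsConeFace (normalCone P G) (normalCone P F ∩ normalCone P G)) := by
  classical
  obtain ⟨s, rfl⟩ := hP
  set Pp : Set V := {x : V | ∀ p ∈ s, p.2 ≤ p.1 x} with hPp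
  have faceFacts : ∀ F : Set V, IsFaceOf Pp F →
      ∃ x₀, x₀ ∈ relint F ∧ F ⊆ Pp ∧
        normalCone Pp F = {y : Module.Dual ℚ V | ∀ p ∈ Pp, y x₀ ≤ y p} ∧
        normalCone Pp F =
          coneList ((s.toList.filter (fun p => decide (p.1 x₀ = p.2))).map Prod.fst) := by
    intro F hF
    obtain ⟨y, ⟨xw, hxwP, hxwmin⟩, hFeq⟩ := hF
    have hFP : F ⊆ Pp := by rw [hFeq]; exact Set.sep_subset _ _
    have hFne : F.Nonempty := ⟨xw, by rw [hFeq]; exact ⟨hxwP, hxwmin⟩⟩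
    have hFconv : Convex ℚ F := by rw [hFeq]; exact convex_polyFace s y
    obtain ⟨x₀, hx₀⟩ := relint_nonempty hFne hFconv
    have h1 := normalCone_eq_point hFP hx₀
    have h2 := normalCone_point_eq_coneList s (hFP hx₀.1)
    exact ⟨x₀, hx₀, hFP, h1, by rw [h1]; exact h2⟩
  refine ⟨?_, ?_, ?_⟩
  · -- Part 1: normal cones are polyhedral cones
    intro F hF
    obtain ⟨x₀, hx₀, hFP, hpt, hcone⟩ := faceFacts F hF
    have hw := weyl (W := Module.Dual ℚ V)
      ((s.toList.filter (fun p => decide (p.1 x₀ = p.2))).map Prod.fst)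
    obtain ⟨t, ht⟩ := hw
    exact ⟨t, by rw [hcone, ht]⟩
  · -- Part 2: faces of normal cones are normal cones
    intro F hF C hC
    obtain ⟨xF, hxF, hFP, hFpt, hFcone⟩ := faceFacts F hF
    obtain ⟨φ, hφpos, hCeq⟩ := hC
    set LF : List (Module.Dual ℚ V) :=
      (s.toList.filter (fun p => decide (p.1 xF = p.2))).map Prod.fst with hLF
    have hLFmin : ∀ a ∈ LF, ∀ p ∈ Pp, a xF ≤ a p := by
      intro a ha
      have : a ∈ normalCone Pp F := by rw [hFcone]; exact mem_coneList_of_mem ha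
      rw [hFpt] at this
      exact this
    have hφgen : ∀ a ∈ LF, 0 ≤ φ a := by
      intro a ha
      apply hφpos
      rw [hFcone]; exact mem_coneList_of_mem ha
    set A₀ : List (Module.Dual ℚ V) := LF.filter (fun a => decide (φ a = 0)) with hA₀
    have hA₀mem : ∀ a ∈ A₀, a ∈ LF ∧ φ a = 0 := by
      intro a ha
      have := List.mem_filter.mp ha
      exact ⟨this.1, of_decide_eq_true this.2⟩
    have hCcone : C = coneList A₀ := by
      apply Set.Subset.antisymm
      · intro y hy
        rw [hCeq] at hy
        obtain ⟨hyNF, hyφ⟩ := hy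
        rw [hFcone] at hyNF
        exact mem_coneList_filter hφgen hyNF hyφ
      · apply coneList_subset
        · refine ⟨?_, ?_, ?_⟩
          · rw [hCeq]
            refine ⟨(isCone_normalCone Pp F).1, by simp⟩
          · rintro a ha b hb
            rw [hCeq] at *
            exact ⟨(isCone_normalCone Pp F).2.1 a ha.1 b hb.1, by rw [map_add, ha.2, hb.2]; ring⟩
          · rintro c hc a ha
            rw [hCeq] at *
            exact ⟨(isCone_normalCone Pp F).2.2 c hc a ha.1, by rw [map_smul, ha.2]; simp⟩
        · intro a ha
          obtain ⟨haLF, haφ⟩ := hA₀mem a ha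
          rw [hCeq]
          refine ⟨?_, haφ⟩
          rw [hFcone]
          exact mem_coneList_of_mem haLF
    set y₀ : Module.Dual ℚ V := A₀.sum with hy₀
    have hy₀C : y₀ ∈ C := by rw [hCcone]; exact sum_mem_coneList A₀
    have hy₀NF : y₀ ∈ normalCone Pp F := by rw [hCeq] at hy₀C; exact hy₀C.1
    have hy₀φ : φ y₀ = 0 := by rw [hCeq] at hy₀C; exact hy₀C.2
    have hy₀min : ∀ p ∈ Pp, y₀ xF ≤ y₀ p := by
      rw [hFpt] at hy₀NF; exact hy₀NF
    have hxFP : xF ∈ Pp := hFP hxF.1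
    set G : Set V := {x ∈ Pp | ∀ p ∈ Pp, y₀ x ≤ y₀ p} with hG
    have hGface : IsFaceOf Pp G := ⟨y₀, ⟨xF, hxFP, hy₀min⟩, rfl⟩
    refine ⟨G, hGface, ?_⟩
    obtain ⟨xG, hxG, hGP, hGpt, hGcone⟩ := faceFacts G hGface
    have hxGG : xG ∈ G := hxG.1
    have hFsubG : F ⊆ G := by
      intro x hx
      exact ⟨hFP hx, fun p hp => hy₀NF x hx p hp⟩
    -- C ⊆ normalCone Pp G
    have hCsub : C ⊆ normalCone Pp G := by
      rw [hCcone]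
      apply coneList_subset (isCone_normalCone Pp G)
      intro a ha
      obtain ⟨haLF, haφ⟩ := hA₀mem a ha
      have hconst : ∀ x ∈ G, a x = a xF := by
        intro x hx
        have hy₀x : y₀ x = y₀ xF := le_antisymm (hx.2 xF hxFP) (hy₀min x hx.1)
        have hsum0 : (A₀.map (fun a' => a' x - a' xF)).sum = 0 := by
          have h1 : (A₀.map (fun a' => a' x - a' xF)).sum
              = (A₀.map (fun a' => a' x)).sum - (A₀.map (fun a' => a' xF)).sum := by
            induction A₀ with
            | nil => simp
            | cons b l ih => simp only [List.map_cons, List.sum_cons, ih]; ring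
          rw [h1, ← list_sum_apply, ← list_sum_apply, ← hy₀, hy₀x]
          ring
        have hnonneg : ∀ r ∈ A₀.map (fun a' => a' x - a' xF), 0 ≤ r := by
          intro r hr
          obtain ⟨a', ha', rfl⟩ := List.mem_map.mp hr
          have := hLFmin a' (hA₀mem a' ha').1 x hx.1
          linarith
        have := list_sum_eq_zero_of_nonneg hnonneg hsum0
          (a x - a xF) (List.mem_map.mpr ⟨a, ha, rfl⟩)
        linarith
      intro x hx p hp
      rw [hconst x hx]
      exact hLFmin a haLF p hp
    -- normalCone Pp G ⊆ C
    have hNGsub : normalCone Pp G ⊆ C := by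
      intro y hy
      have hyNF : y ∈ normalCone Pp F := fun x hx p hp => hy x (hFsubG hx) p hp
      have hcmin : ∀ c ∈ (s.toList.filter (fun p => decide (p.1 xG = p.2))).map Prod.fst,
          ∀ p ∈ Pp, c xG ≤ c p := by
        intro c hc
        have : c ∈ normalCone Pp G := by rw [hGcone]; exact mem_coneList_of_mem hc
        rw [hGpt] at this
        exact this
      have hφc : ∀ c ∈ (s.toList.filter (fun p => decide (p.1 xG = p.2))).map Prod.fst,
          φ c = 0 := by
        intro c hc
        have hcm := hcmin c hc
        have hcNG : c ∈ normalCone Pp G := by rw [hGcone]; exact mem_coneList_of_mem hc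
        have hcNF : c ∈ normalCone Pp F := fun x hx p hp => hcNG x (hFsubG hx) p hp
        have hφc0 : 0 ≤ φ c := hφpos c hcNF
        -- ratio bound
        have hy₀xG : ∀ p ∈ Pp, y₀ xG ≤ y₀ p := hxGG.2
        have himp : ∀ p ∈ Pp, y₀ p = y₀ xG → c p = c xG := by
          intro p hp hyp
          have hpG : p ∈ G := ⟨hp, fun q hq => le_trans (le_of_eq hyp) (hy₀xG q hq)⟩
          exact const_on_of_relint hGP hxG hcm p hpG
        obtain ⟨ε, hεpos, hεle⟩ := ratio_bound s (hGP hxGG) hy₀xG hcm himp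
        have hmemNF : y₀ - ε • c ∈ normalCone Pp F := by
          intro x hx p hp
          have hy₀xF : y₀ x = y₀ xG :=
            le_antisymm (le_trans (hy₀NF x hx xG (hGP hxGG)) (le_refl _)) (hy₀xG x (hFP hx))
          have hcxF : c x = c xG := const_on_of_relint hGP hxG hcm x (hFsubG hx)
          have := hεle p hp
          simp only [LinearMap.sub_apply, LinearMap.smul_apply, smul_eq_mul]
          rw [hy₀xF, hcxF]
          linarith
        have := hφpos _ hmemNF
        rw [map_sub, map_smul, hy₀φ, smul_eq_mul] at this
        have : φ c ≤ 0 := by nlinarith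
        linarith
      have hyφ : φ y = 0 := by
        have hyNG : y ∈ normalCone Pp G := hy
        rw [hGcone] at hyNG
        have hker : y ∈ {z : Module.Dual ℚ V | φ z = 0} := by
          refine coneList_subset (S := {z : Module.Dual ℚ V | φ z = 0}) ⟨?_, ?_, ?_⟩ hφc hyNG
          · simp
          · intro a ha b hb; simp only [Set.mem_setOf_eq, map_add] at *; rw [ha, hb]; ring
          · intro d hd a ha; simp only [Set.mem_setOf_eq, map_smul, smul_eq_mul] at *; rw [ha]; ring
        exact hker
      rw [hCeq]
      exact ⟨hyNF, hyφ⟩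
    exact Set.Subset.antisymm hCsub hNGsub
  · -- Part 3: intersections are common faces
    intro F G hF hG
    obtain ⟨xF, hxF, hFP, hFpt, _⟩ := faceFacts F hF
    obtain ⟨xG, hxG, hGP, hGpt, _⟩ := faceFacts G hG
    have key : ∀ (F' G' : Set V) (xF' xG' : V), F' ⊆ Pp → G' ⊆ Pp →
        normalCone Pp F' = {y : Module.Dual ℚ V | ∀ p ∈ Pp, y xF' ≤ y p} →
        normalCone Pp G' = {y : Module.Dual ℚ V | ∀ p ∈ Pp, y xG' ≤ y p} →
        xF' ∈ F' → xG' ∈ G' →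
        IsConeFace (normalCone Pp F') (normalCone Pp F' ∩ normalCone Pp G') := by
      intro F' G' xF' xG' hFP' hGP' hFpt' hGpt' hxF' hxG'
      refine ⟨Module.Dual.eval ℚ V (xG' - xF'), ?_, ?_⟩
      · intro y hy
        rw [hFpt'] at hy
        have := hy xG' (hGP' hxG')
        rw [Module.Dual.eval_apply, map_sub]
        linarith
      · ext y
        simp only [Set.mem_inter_iff, Set.mem_setOf_eq, map_sub, LinearMap.sub_apply,
          Module.Dual.eval_apply]
        constructor
        · rintro ⟨hyF, hyG⟩
          have h1 : y xF' ≤ y xG' := by rw [hFpt'] at hyF; exact hyF xG' (hGP' hxG')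
          have h2 : y xG' ≤ y xF' := by rw [hGpt'] at hyG; exact hyG xF' (hFP' hxF')
          exact ⟨hyF, by linarith⟩
        · rintro ⟨hyF, hyeq⟩
          refine ⟨hyF, ?_⟩
          rw [hGpt']
          intro p hp
          have : y xF' ≤ y p := by rw [hFpt'] at hyF; exact hyF p hp
          linarith
    constructor
    · exact key F G xF xG hFP hGP hFpt hGpt hxF.1 hxG.1
    · have := key G F xG xF hGP hFP hGpt hFpt hxG.1 hxF.1
      rwa [Set.inter_comm] at this
end

section
/- Let V be a finite-dimensional rational vector space, M a subspace, P ⊆ V a polyhedral cone, and suppose F is a face of P with relint(F) ∩ M ≠ ∅ and ⟨F⟩ + M = V (F is M-stable). Suppose y ∈ M* satisfies ⟨F ∩ M, y⟩ = 0 and ⟨P ∩ M, y⟩ ≥ 0, and let ỹ ∈ V* be any extension of y with ⟨F, ỹ⟩ = 0. Then ⟨P, ỹ⟩ ≥ 0, i.e., ỹ lies in the normal cone N_F P (assuming 0 ∈ relint F). -/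
/-- Surjectivity step: for an `M`-stable face `F` of a polyhedral cone `P` with
`0 ∈ relint F`, if `y ∈ M*` vanishes on `F ∩ M` and is nonnegative on `P ∩ M`, then
any extension `ỹ ∈ V*` of `y` vanishing on `F` is nonnegative on `P`, i.e., lies in
the normal cone `N_F P`. -/
theorem extension_mem_normalCone
    (V : Type*) [AddCommGroup V] [Module ℚ V] [FiniteDimensional ℚ V]
    (M : Submodule ℚ V) (P F : Set V)
    (hP : IsPolyhedralCone P) (hF : IsFace P F) (h0 : (0 : V) ∈ relint F)
    (hrel : (relint F ∩ (M : Set V)).Nonempty)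
    (hspan : spanDiff F ⊔ M = ⊤)
    (y : Module.Dual ℚ M)
    (hy0 : ∀ x : M, (x : V) ∈ F → y x = 0)
    (hy1 : ∀ x : M, (x : V) ∈ P → 0 ≤ y x)
    (ytilde : Module.Dual ℚ V)
    (hext : ∀ m : M, ytilde (m : V) = y m)
    (hF0 : ∀ x ∈ F, ytilde x = 0) :
    (∀ p ∈ P, 0 ≤ ytilde p) ∧ ytilde ∈ normalCone P F := by

  obtain ⟨s, hPs⟩ := hP
  obtain ⟨y₀, hFy⟩ := hF
  have h0F : (0 : V) ∈ F := h0.1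
  have h0F' := hFy ▸ h0F
  have h0P : (0 : V) ∈ P := h0F'.1
  have hmin : ∀ p ∈ P, (0 : ℚ) ≤ y₀ p := by
    intro p hp
    have := h0F'.2 p hp
    simpa using this
  have hFP : F ⊆ P := by
    intro x hx
    exact (hFy ▸ hx).1
  have hFle : ∀ x ∈ F, y₀ x ≤ 0 := by
    intro x hx
    have := (hFy ▸ hx).2 0 h0P
    simpa using this
  have hmemF : ∀ z, z ∈ P → y₀ z ≤ 0 → z ∈ F := by
    intro z hz hle
    rw [hFy]
    exact ⟨hz, fun p hp => hle.trans (hmin p hp)⟩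
  have hPadd : ∀ a ∈ P, ∀ b ∈ P, a + b ∈ P := by
    intro a ha b hb
    rw [hPs] at *
    intro l hl
    have h1 := ha l hl
    have h2 := hb l hl
    simp only [map_add]
    linarith
  have hPsmul : ∀ (c : ℚ), 0 ≤ c → ∀ a ∈ P, c • a ∈ P := by
    intro c hc a ha
    rw [hPs] at *
    intro l hl
    rw [map_smul, smul_eq_mul]
    exact mul_nonneg hc (ha l hl)
  have hFsmul : ∀ (c : ℚ), 0 ≤ c → ∀ x ∈ F, c • x ∈ F := by
    intro c hc x hx
    refine hmemF _ (hPsmul c hc x (hFP hx)) ?_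
    rw [map_smul, smul_eq_mul]
    exact mul_nonpos_of_nonneg_of_nonpos hc (hFle x hx)
  have hFneg : ∀ x ∈ F, -x ∈ F := by
    intro x hx
    obtain ⟨ε, hε, hmem⟩ := h0.2 x hx
    have hεx : ε • (-x) ∈ F := by simpa using hmem
    have : ε⁻¹ • (ε • (-x)) ∈ F := hFsmul ε⁻¹ (by positivity) _ hεx
    rwa [smul_smul, inv_mul_cancel₀ (ne_of_gt hε), one_smul] at this
  have hFadd : ∀ x ∈ F, ∀ z ∈ F, x + z ∈ F := by
    intro x hx z hz
    refine hmemF _ (hPadd x (hFP hx) z (hFP hz)) ?_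
    rw [map_add]
    linarith [hFle x hx, hFle z hz]
  have hFspan : ∀ v ∈ spanDiff F, v ∈ F := by
    intro v hv
    induction hv using Submodule.span_induction with
    | mem v hv =>
        obtain ⟨a, ha, b, hb, rfl⟩ := hv
        simpa [sub_eq_add_neg] using hFadd a ha _ (hFneg b hb)
    | zero => exact h0F
    | add a b _ _ ha hb => exact hFadd a ha b hb
    | smul c a _ ha =>
        rcases le_or_gt 0 c with hc | hc
        · exact hFsmul c hc a ha
        · have : c • a = (-c) • (-a) := by simp
          rw [this]
          exact hFsmul (-c) (by linarith) _ (hFneg a ha)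
  have key : ∀ p ∈ P, 0 ≤ ytilde p := by
    intro p hp
    have hptop : p ∈ spanDiff F ⊔ M := by rw [hspan]; trivial
    obtain ⟨f, hf, m, hm, rfl⟩ := Submodule.mem_sup.mp hptop
    have hfF : f ∈ F := hFspan f hf
    have hmP : m ∈ P := by
      have := hPadd _ hp _ (hFP (hFneg f hfF))
      simpa using this
    have h1 : ytilde (f + m) = y ⟨m, hm⟩ := by
      rw [map_add, hF0 f hfF, zero_add]
      exact hext ⟨m, hm⟩
    rw [h1]
    exact hy1 ⟨m, hm⟩ hmP
  refine ⟨key, ?_⟩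
  intro x hx p hp
  rw [hF0 x hx]
  exact key p hp
end
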